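/- arXiv:0808.1910 — 7 statements merged into one kernel-verified Lean document; each statement's English description precedes it below -/
import Mathlib

section
/- The function 𝒥 : [0,∞)^W → ℝ defined by 𝒥(c) = sup_{z ∈ (0,∞)^Γ} Σ_{(σ,σ')∈W} c(σ,σ')(1 − z_{σ'}/z_σ) is convex and continuous on [0,∞)^W, and for every c ∈ [0,∞)^W it satisfies 0 ≤ 𝒥(c) ≤ Σ_{(σ,σ')∈W} c(σ,σ') < ∞. -/
open Finset

/-- `Jhat c z = Σ_{(σ,σ')∈W} c(σ,σ')(1 − z_{σ'}/z_σ)`, where `W` is the off-diagonal of `Γ × Γ`. -/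
noncomputable def Jhat {Γ : Type*} [Fintype Γ] [DecidableEq Γ]
    (c : Γ → Γ → ℝ) (z : Γ → ℝ) : ℝ :=
  ∑ p ∈ Finset.univ.filter (fun p : Γ × Γ => p.1 ≠ p.2), c p.1 p.2 * (1 - z p.2 / z p.1)

/-- `𝒥(c) = sup_{z ∈ (0,∞)^Γ} Jhat c z`. -/
noncomputable def Jfun {Γ : Type*} [Fintype Γ] [DecidableEq Γ] (c : Γ → Γ → ℝ) : ℝ :=
  ⨆ z : {z : Γ → ℝ // ∀ σ, 0 < z σ}, Jhat c z.1

section Aux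

variable {Γ : Type*} [Fintype Γ] [DecidableEq Γ]

instance posPi.nonempty : Nonempty {z : Γ → ℝ // ∀ σ, 0 < z σ} :=
  ⟨⟨fun _ => 1, fun _ => one_pos⟩⟩

lemma jhat_le_sum {c : Γ → Γ → ℝ} (hc : ∀ σ σ' : Γ, σ ≠ σ' → 0 ≤ c σ σ')
    {z : Γ → ℝ} (hz : ∀ σ, 0 < z σ) :
    Jhat c z ≤ ∑ p ∈ Finset.univ.filter (fun p : Γ × Γ => p.1 ≠ p.2), c p.1 p.2 := by
  refine Finset.sum_le_sum fun p hp => ?_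
  have hp' : p.1 ≠ p.2 := (Finset.mem_filter.mp hp).2
  have h1 : 0 < z p.2 / z p.1 := div_pos (hz p.2) (hz p.1)
  have h2 := hc p.1 p.2 hp'
  nlinarith

lemma jhat_bdd {c : Γ → Γ → ℝ} (hc : ∀ σ σ' : Γ, σ ≠ σ' → 0 ≤ c σ σ') :
    BddAbove (Set.range fun z : {z : Γ → ℝ // ∀ σ, 0 < z σ} => Jhat c z.1) := by
  refine ⟨∑ p ∈ Finset.univ.filter (fun p : Γ × Γ => p.1 ≠ p.2), c p.1 p.2, ?_⟩
  rintro x ⟨z, rfl⟩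
  exact jhat_le_sum hc z.2

lemma jhat_one (c : Γ → Γ → ℝ) : Jhat c (fun _ => (1:ℝ)) = 0 := by
  simp [Jhat]

lemma jfun_nonneg {c : Γ → Γ → ℝ} (hc : ∀ σ σ' : Γ, σ ≠ σ' → 0 ≤ c σ σ') :
    0 ≤ Jfun c := by
  have h : Jhat c (fun _ => (1:ℝ)) ≤ Jfun c :=
    le_ciSup (jhat_bdd hc) (⟨fun _ => 1, fun _ => one_pos⟩ : {z : Γ → ℝ // ∀ σ, 0 < z σ})
  rw [jhat_one] at h
  exact h

lemma jfun_le_sum {c : Γ → Γ → ℝ} (hc : ∀ σ σ' : Γ, σ ≠ σ' → 0 ≤ c σ σ') :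
    Jfun c ≤ ∑ p ∈ Finset.univ.filter (fun p : Γ × Γ => p.1 ≠ p.2), c p.1 p.2 :=
  ciSup_le fun z => jhat_le_sum hc z.2

lemma jhat_comb (a b : ℝ) (c d : Γ → Γ → ℝ) (z : Γ → ℝ) :
    Jhat (a • c + b • d) z = a * Jhat c z + b * Jhat d z := by
  unfold Jhat
  rw [Finset.mul_sum, Finset.mul_sum, ← Finset.sum_add_distrib]
  refine Finset.sum_congr rfl fun p hp => ?_
  simp only [Pi.add_apply, Pi.smul_apply, smul_eq_mul]
  ring

lemma jfun_convexOn :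
    ConvexOn ℝ {c : Γ → Γ → ℝ | ∀ σ σ' : Γ, σ ≠ σ' → 0 ≤ c σ σ'} (Jfun (Γ := Γ)) := by
  constructor
  · intro c hc d hd a b ha hb hab σ σ' hσ
    have h1 := hc σ σ' hσ
    have h2 := hd σ σ' hσ
    simp only [Pi.add_apply, Pi.smul_apply, smul_eq_mul]
    exact add_nonneg (mul_nonneg ha h1) (mul_nonneg hb h2)
  · intro c hc d hd a b ha hb hab
    refine ciSup_le fun z => ?_
    rw [jhat_comb]
    exact add_le_add (mul_le_mul_of_nonneg_left (le_ciSup (jhat_bdd hc) z) ha)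
      (mul_le_mul_of_nonneg_left (le_ciSup (jhat_bdd hd) z) hb)

lemma entry_dist (d c : Γ → Γ → ℝ) (σ σ' : Γ) : |d σ σ' - c σ σ'| ≤ dist d c := by
  have h1 := dist_le_pi_dist d c σ
  have h2 := dist_le_pi_dist (d σ) (c σ) σ'
  rw [Real.dist_eq] at h2
  linarith

lemma jhat_diff (c d : Γ → Γ → ℝ) (z : Γ → ℝ) :
    |Jhat d z - Jhat c z| ≤ dist d c *
      ∑ p ∈ Finset.univ.filter (fun p : Γ × Γ => p.1 ≠ p.2), |1 - z p.2 / z p.1| := by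
  unfold Jhat
  rw [← Finset.sum_sub_distrib, Finset.mul_sum]
  refine le_trans (Finset.abs_sum_le_sum_abs _ _) (Finset.sum_le_sum fun p hp => ?_)
  have h : d p.1 p.2 * (1 - z p.2 / z p.1) - c p.1 p.2 * (1 - z p.2 / z p.1)
      = (d p.1 p.2 - c p.1 p.2) * (1 - z p.2 / z p.1) := by ring
  rw [h, abs_mul]
  exact mul_le_mul_of_nonneg_right (entry_dist d c p.1 p.2) (abs_nonneg _)

end Aux

/-- `𝒥` is convex and continuous on `[0,∞)^W`, and for every `c ∈ [0,∞)^W`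
it satisfies `0 ≤ 𝒥(c) ≤ Σ_{(σ,σ')∈W} c(σ,σ')`. -/
theorem stmt0 {Γ : Type*} [Fintype Γ] [DecidableEq Γ] (hcard : 1 < Fintype.card Γ) :
    ConvexOn ℝ {c : Γ → Γ → ℝ | ∀ σ σ' : Γ, σ ≠ σ' → 0 ≤ c σ σ'} (Jfun (Γ := Γ)) ∧
    ContinuousOn (Jfun (Γ := Γ)) {c : Γ → Γ → ℝ | ∀ σ σ' : Γ, σ ≠ σ' → 0 ≤ c σ σ'} ∧
    ∀ c : Γ → Γ → ℝ, (∀ σ σ' : Γ, σ ≠ σ' → 0 ≤ c σ σ') →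
      0 ≤ Jfun c ∧
      Jfun c ≤ ∑ p ∈ Finset.univ.filter (fun p : Γ × Γ => p.1 ≠ p.2), c p.1 p.2 := by
  set W : Finset (Γ × Γ) := Finset.univ.filter (fun p : Γ × Γ => p.1 ≠ p.2) with hW
  refine ⟨jfun_convexOn, ?_, fun c hc => ⟨jfun_nonneg hc, jfun_le_sum hc⟩⟩
  -- Continuity
  intro c₀ hc₀
  have hc₀' : ∀ σ σ' : Γ, σ ≠ σ' → 0 ≤ c₀ σ σ' := hc₀
  rw [ContinuousWithinAt, Metric.tendsto_nhdsWithin_nhds]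
  intro ε hε
  -- lower semicontinuity data
  have hEq : Jfun c₀ = ⨆ z : {z : Γ → ℝ // ∀ σ, 0 < z σ}, Jhat c₀ z.1 := rfl
  have hlt : Jfun c₀ - ε / 2 < ⨆ z : {z : Γ → ℝ // ∀ σ, 0 < z σ}, Jhat c₀ z.1 := by
    rw [← hEq]; linarith
  obtain ⟨z₀, hz₀⟩ := exists_lt_of_lt_ciSup hlt
  set K : ℝ := ∑ p ∈ W, |1 - z₀.1 p.2 / z₀.1 p.1| with hK
  have hK0 : 0 ≤ K := Finset.sum_nonneg fun p _ => abs_nonneg _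
  -- δ₀ : below the smallest positive entry of c₀
  obtain ⟨σa, σb, hab⟩ := Fintype.exists_pair_of_one_lt_card hcard
  have hWne : W.Nonempty := ⟨(σa, σb), by simp [hW, hab]⟩
  set δ₀ : ℝ := W.inf' hWne (fun p => if c₀ p.1 p.2 ≤ 0 then 1 else c₀ p.1 p.2) with hδ₀def
  have hδ₀pos : 0 < δ₀ := by
    rw [hδ₀def, Finset.lt_inf'_iff]
    intro p hp
    by_cases h : c₀ p.1 p.2 ≤ 0
    · simp [h]
    · simp only [if_neg h]; linarith [not_le.mp h]
  have hδ₀le : ∀ p ∈ W, 0 < c₀ p.1 p.2 → δ₀ ≤ c₀ p.1 p.2 := by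
    intro p hp hpos
    have h := Finset.inf'_le (f := fun p : Γ × Γ => if c₀ p.1 p.2 ≤ 0 then 1 else c₀ p.1 p.2) hp
    rwa [if_neg (not_le.mpr hpos)] at h
  set M : ℝ := (∑ p ∈ W, c₀ p.1 p.2) + W.card * δ₀ with hM
  have hM0 : 0 ≤ M := by
    have h1 : 0 ≤ ∑ p ∈ W, c₀ p.1 p.2 :=
      Finset.sum_nonneg fun p hp => hc₀' p.1 p.2 (Finset.mem_filter.mp hp).2
    have h2 : (0:ℝ) ≤ W.card * δ₀ := by positivity
    linarith
  refine ⟨min (min δ₀ (ε / 2 / (K + 1))) (ε / 2 * δ₀ / (M + 1)), by positivity, ?_⟩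
  intro d hd hdist
  have hd' : ∀ σ σ' : Γ, σ ≠ σ' → 0 ≤ d σ σ' := hd
  have hdist0 : 0 ≤ dist d c₀ := dist_nonneg
  have hdist1 : dist d c₀ < δ₀ :=
    lt_of_lt_of_le hdist (le_trans (min_le_left _ _) (min_le_left _ _))
  have hdist2 : dist d c₀ < ε / 2 / (K + 1) :=
    lt_of_lt_of_le hdist (le_trans (min_le_left _ _) (min_le_right _ _))
  have hdist3 : dist d c₀ < ε / 2 * δ₀ / (M + 1) := lt_of_lt_of_le hdist (min_le_right _ _)
  rw [Real.dist_eq, abs_sub_lt_iff]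
  constructor
  · -- upper semicontinuity : Jfun d - Jfun c₀ < ε
    by_cases hdc : d = c₀
    · simp [hdc, hε]
    · have ht0 : 0 < dist d c₀ := dist_pos.mpr hdc
      set t : ℝ := dist d c₀ / δ₀ with htdef
      have htpos : 0 < t := div_pos ht0 hδ₀pos
      have htlt : t < 1 := (div_lt_one hδ₀pos).mpr hdist1
      set e : Γ → Γ → ℝ := c₀ + t⁻¹ • (d - c₀) with hedef
      have heval : ∀ σ σ', e σ σ' = c₀ σ σ' + t⁻¹ * (d σ σ' - c₀ σ σ') := by
        intro σ σ'
        simp [hedef, Pi.add_apply, Pi.smul_apply, Pi.sub_apply, smul_eq_mul]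
      have hentry : ∀ σ σ', |d σ σ' - c₀ σ σ'| ≤ t * δ₀ := by
        intro σ σ'
        have h := entry_dist d c₀ σ σ'
        rw [htdef, div_mul_cancel₀ _ (ne_of_gt hδ₀pos)]
        exact h
      have he : ∀ σ σ' : Γ, σ ≠ σ' → 0 ≤ e σ σ' := by
        intro σ σ' hσ
        rw [heval]
        by_cases hzero : c₀ σ σ' ≤ 0
        · have hc0 : c₀ σ σ' = 0 := le_antisymm hzero (hc₀' σ σ' hσ)
          rw [hc0]
          have hd0 := hd' σ σ' hσ
          have hnn : 0 ≤ t⁻¹ * (d σ σ' - 0) := by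
            apply mul_nonneg (le_of_lt (inv_pos.mpr htpos)); linarith
          simpa using hnn
        · have hpos : 0 < c₀ σ σ' := not_le.mp hzero
          have hle : δ₀ ≤ c₀ σ σ' := by
            apply hδ₀le (σ, σ') _ hpos
            simp [hW, hσ]
          have h1 : |d σ σ' - c₀ σ σ'| ≤ t * δ₀ := hentry σ σ'
          have habs : -(t * δ₀) ≤ d σ σ' - c₀ σ σ' := neg_le_of_abs_le h1
          have hinvpos : 0 < t⁻¹ := inv_pos.mpr htpos
          have h2 : -δ₀ ≤ t⁻¹ * (d σ σ' - c₀ σ σ') := by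
            have h3 := mul_le_mul_of_nonneg_left habs (le_of_lt hinvpos)
            have hinv : t⁻¹ * (t * δ₀) = δ₀ := by field_simp
            nlinarith
          linarith
      have hdeq : d = (1 - t) • c₀ + t • e := by
        funext σ σ'
        simp only [Pi.add_apply, Pi.smul_apply, smul_eq_mul]
        rw [heval]
        field_simp
        ring
      have hconv := jfun_convexOn.2 hc₀ he (by linarith : (0:ℝ) ≤ 1 - t)
        (le_of_lt htpos) (by ring)
      rw [← hdeq] at hconv
      have hje : Jfun e ≤ M := by
        refine le_trans (jfun_le_sum he) ?_
        rw [hM]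
        have hterm : ∀ p ∈ W, e p.1 p.2 ≤ c₀ p.1 p.2 + δ₀ := by
          intro p hp
          rw [heval]
          have h1 := hentry p.1 p.2
          have h2 : d p.1 p.2 - c₀ p.1 p.2 ≤ t * δ₀ := le_of_abs_le h1
          have hinvpos : 0 < t⁻¹ := inv_pos.mpr htpos
          have h3 : t⁻¹ * (d p.1 p.2 - c₀ p.1 p.2) ≤ δ₀ := by
            have h4 := mul_le_mul_of_nonneg_left h2 (le_of_lt hinvpos)
            have hinv : t⁻¹ * (t * δ₀) = δ₀ := by field_simp
            linarith
          linarith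
        calc ∑ p ∈ W, e p.1 p.2 ≤ ∑ p ∈ W, (c₀ p.1 p.2 + δ₀) := Finset.sum_le_sum hterm
          _ = (∑ p ∈ W, c₀ p.1 p.2) + W.card * δ₀ := by
              rw [Finset.sum_add_distrib, Finset.sum_const, nsmul_eq_mul]
      have hj0 : 0 ≤ Jfun c₀ := jfun_nonneg hc₀'
      have htM : t * M < ε / 2 := by
        have hM1 : (0:ℝ) < M + 1 := by linarith
        have h1 : dist d c₀ * (M + 1) < ε / 2 * δ₀ := by
          have := (lt_div_iff₀ hM1).mp hdist3
          linarith
        rw [htdef, div_mul_eq_mul_div, div_lt_iff₀ hδ₀pos]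
        have h2 : dist d c₀ * M ≤ dist d c₀ * (M + 1) :=
          mul_le_mul_of_nonneg_left (by linarith) hdist0
        linarith
      simp only [smul_eq_mul] at hconv
      have hJe := mul_le_mul_of_nonneg_left hje (le_of_lt htpos)
      have hJ0t : 0 ≤ t * Jfun c₀ := mul_nonneg (le_of_lt htpos) hj0
      nlinarith [hconv]
  · -- lower semicontinuity : Jfun c₀ - Jfun d < ε
    have h1 : Jhat d z₀.1 ≤ Jfun d := le_ciSup (jhat_bdd hd') z₀
    have h2 := jhat_diff c₀ d z₀.1
    rw [← hK] at h2
    have h3 : Jhat c₀ z₀.1 - dist d c₀ * K ≤ Jhat d z₀.1 := by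
      have := neg_le_of_abs_le h2
      linarith
    have hKK : dist d c₀ * K < ε / 2 := by
      have hK1 : (0:ℝ) < K + 1 := by linarith
      have h4 : dist d c₀ * (K + 1) < ε / 2 := by
        have := (lt_div_iff₀ hK1).mp hdist2
        linarith
      have h5 : dist d c₀ * K ≤ dist d c₀ * (K + 1) :=
        mul_le_mul_of_nonneg_left (by linarith) hdist0
      linarith
    linarith [hz₀]
end

section
/- Let c ∈ [0,∞)^W be irreducible. Then the function Φ(z) = Σ_{(σ,σ')∈W} c(σ,σ') z_{σ'}/z_σ attains its infimum over (0,∞)^Γ at some point of the normalized set 𝒜 = {z ∈ (0,∞)^Γ : Σ_{σ∈Γ} z_σ² = 1}; equivalently, the supremum defining 𝒥(c) = sup_{z ∈ (0,∞)^Γ} Σ_{(σ,σ')∈W} c(σ,σ')(1 − z_{σ'}/z_σ) is attained at some z ∈ 𝒜. -/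
open Finset

/-- `c ∈ [0,∞)^W` is irreducible: for any `σ ≠ σ'` there is a finite chain
`σ₁ = σ, …, σ_n = σ'` with `c(σ_i, σ_{i+1}) > 0` for all `i`. -/
def IrreducibleRates {Γ : Type*} (c : Γ → Γ → ℝ) : Prop :=
  ∀ σ σ' : Γ, σ ≠ σ' → Relation.TransGen (fun a b => 0 < c a b) σ σ'

/-- `Φ(z) = Σ_{(σ,σ')∈W} c(σ,σ') z_{σ'}/z_σ`. -/
noncomputable def PhiFun {Γ : Type*} [Fintype Γ] [DecidableEq Γ]
    (c : Γ → Γ → ℝ) (z : Γ → ℝ) : ℝ :=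
  ∑ p ∈ Finset.univ.filter (fun p : Γ × Γ => p.1 ≠ p.2), c p.1 p.2 * (z p.2 / z p.1)

lemma jhat_eq {Γ : Type*} [Fintype Γ] [DecidableEq Γ] (c : Γ → Γ → ℝ) (z : Γ → ℝ) :
    Jhat c z = (∑ p ∈ Finset.univ.filter (fun p : Γ × Γ => p.1 ≠ p.2), c p.1 p.2)
      - PhiFun c z := by
  simp [Jhat, PhiFun, mul_sub, Finset.sum_sub_distrib]

lemma phi_scale {Γ : Type*} [Fintype Γ] [DecidableEq Γ] (c : Γ → Γ → ℝ) (w : Γ → ℝ)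
    (r : ℝ) (hr : r ≠ 0) : PhiFun c (fun σ => w σ / r) = PhiFun c w := by
  unfold PhiFun
  refine Finset.sum_congr rfl fun p _ => ?_
  show c p.1 p.2 * (w p.2 / r / (w p.1 / r)) = _
  rcases eq_or_ne (w p.1) 0 with h | h
  · simp [h]
  · congr 1
    field_simp

/-- for irreducible `c ∈ [0,∞)^W`, `Φ` attains its infimum over `(0,∞)^Γ`
at some point of `𝒜 = {z ∈ (0,∞)^Γ : Σ z_σ² = 1}`; equivalently the supremum defining
`𝒥(c)` is attained at some `z ∈ 𝒜`. -/
theorem stmt1 {Γ : Type*} [Fintype Γ] [DecidableEq Γ] (hcard : 1 < Fintype.card Γ)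
    (c : Γ → Γ → ℝ) (hc : ∀ σ σ' : Γ, σ ≠ σ' → 0 ≤ c σ σ') (hirr : IrreducibleRates c) :
    ∃ z : Γ → ℝ, (∀ σ, 0 < z σ) ∧ (∑ σ, (z σ) ^ 2 = 1) ∧
      (∀ w : Γ → ℝ, (∀ σ, 0 < w σ) → PhiFun c z ≤ PhiFun c w) ∧
      (∀ w : Γ → ℝ, (∀ σ, 0 < w σ) → Jhat c w ≤ Jhat c z) := by
  classical
  set W : Finset (Γ × Γ) := Finset.univ.filter (fun p : Γ × Γ => p.1 ≠ p.2) with hW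
  have hcard0 : (0 : ℝ) < (Fintype.card Γ : ℝ) := by
    have : 0 < Fintype.card Γ := lt_trans Nat.zero_lt_one hcard
    exact_mod_cast this
  set s : ℝ := Real.sqrt ((Fintype.card Γ : ℝ)⁻¹) with hs_def
  have hs : 0 < s := Real.sqrt_pos.2 (by positivity)
  set z0 : Γ → ℝ := fun _ => s with hz0_def
  have hz0sum : ∑ σ : Γ, z0 σ ^ 2 = 1 := by
    have : s ^ 2 = (Fintype.card Γ : ℝ)⁻¹ := Real.sq_sqrt (by positivity)
    simp [hz0_def, this, Finset.sum_const, Finset.card_univ]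
    field_simp
  have hPhi0 : PhiFun c z0 = ∑ p ∈ W, c p.1 p.2 := by
    unfold PhiFun
    refine Finset.sum_congr rfl fun p _ => ?_
    rw [hz0_def]
    rw [div_self hs.ne', mul_one]
  set M := PhiFun c z0 with hM
  have hcM : ∀ a b : Γ, a ≠ b → c a b ≤ M := by
    intro a b hab
    rw [hPhi0]
    have hmem : (a, b) ∈ W := by simp [hW, hab]
    exact Finset.single_le_sum (f := fun p : Γ × Γ => c p.1 p.2)
      (fun p hp => hc p.1 p.2 (by simpa [hW] using hp)) hmem
  set K : Set (Γ → ℝ) := {z | (∀ σ, 0 ≤ z σ) ∧ (∑ σ : Γ, z σ ^ 2 = 1) ∧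
      ∀ a b : Γ, a ≠ b → c a b * z b ≤ M * z a} with hK
  have hz0K : z0 ∈ K := by
    refine ⟨fun _ => hs.le, hz0sum, fun a b hab => ?_⟩
    have : c a b ≤ M := hcM a b hab
    simpa [hz0_def] using mul_le_mul_of_nonneg_right this hs.le
  -- positivity on K
  have hKpos : ∀ z ∈ K, ∀ σ, 0 < z σ := by
    intro z hz σ
    by_contra hσ
    have hzσ : z σ = 0 := le_antisymm (not_lt.1 hσ) (hz.1 σ)
    have key : ∀ x y : Γ, 0 < c x y → z x = 0 → z y = 0 := by
      intro x y hcxy hx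
      by_cases hxy : x = y
      · rwa [← hxy]
      · have h1 := hz.2.2 x y hxy
        rw [hx, mul_zero] at h1
        have h2 := hz.1 y
        nlinarith
    have hall0 : ∀ τ : Γ, Relation.TransGen (fun a b => 0 < c a b) σ τ → z τ = 0 := by
      intro τ ht
      induction ht with
      | single h => exact key _ _ h hzσ
      | tail _ h2 ih => exact key _ _ h2 ih
    have hall : ∀ τ : Γ, z τ = 0 := by
      intro τ
      by_cases hτ : σ = τ
      · rwa [← hτ]
      · exact hall0 τ (hirr σ τ hτ)
    have hzero : ∑ σ : Γ, z σ ^ 2 = 0 := by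
      refine Finset.sum_eq_zero fun τ _ => ?_
      rw [hall τ]; ring
    rw [hz.2.1] at hzero
    exact one_ne_zero hzero
  -- K is closed
  have hKclosed : IsClosed K := by
    have h1 : IsClosed {z : Γ → ℝ | ∀ σ, 0 ≤ z σ} := by
      rw [Set.setOf_forall]
      exact isClosed_iInter fun σ => isClosed_le continuous_const (continuous_apply σ)
    have h2 : IsClosed {z : Γ → ℝ | ∑ σ : Γ, z σ ^ 2 = 1} :=
      isClosed_eq (continuous_finset_sum _ fun σ _ => (continuous_apply σ).pow 2)
        continuous_const
    have h3 : IsClosed {z : Γ → ℝ | ∀ a b : Γ, a ≠ b → c a b * z b ≤ M * z a} := by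
      rw [Set.setOf_forall]
      refine isClosed_iInter fun a => ?_
      rw [Set.setOf_forall]
      refine isClosed_iInter fun b => ?_
      rw [Set.setOf_forall]
      refine isClosed_iInter fun _ => ?_
      exact isClosed_le (continuous_const.mul (continuous_apply b)) (continuous_const.mul (continuous_apply a))
    have : K = {z : Γ → ℝ | ∀ σ, 0 ≤ z σ} ∩ ({z : Γ → ℝ | ∑ σ : Γ, z σ ^ 2 = 1} ∩
        {z : Γ → ℝ | ∀ a b : Γ, a ≠ b → c a b * z b ≤ M * z a}) := by
      ext z; simp [hK, Set.mem_setOf_eq, and_assoc]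
    rw [this]
    exact h1.inter (h2.inter h3)
  -- K is compact
  have hKsub : K ⊆ Metric.closedBall (0 : Γ → ℝ) 1 := by
    intro z hz
    rw [Metric.mem_closedBall, dist_zero_right]
    refine pi_norm_le_iff_of_nonneg zero_le_one |>.2 fun σ => ?_
    rw [Real.norm_eq_abs]
    have h1 : z σ ^ 2 ≤ 1 := by
      rw [← hz.2.1]
      exact Finset.single_le_sum (f := fun τ => z τ ^ 2) (fun τ _ => sq_nonneg _)
        (Finset.mem_univ σ)
    exact (sq_le_one_iff_abs_le_one _).mp h1
  have hKcompact : IsCompact K :=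
    (isCompact_closedBall (0 : Γ → ℝ) 1).of_isClosed_subset hKclosed hKsub
  -- Φ is continuous on K
  have hcont : ContinuousOn (PhiFun c) K := by
    unfold PhiFun
    refine continuousOn_finset_sum _ fun p _ => ?_
    refine continuousOn_const.mul (ContinuousOn.div
      (continuous_apply p.2).continuousOn (continuous_apply p.1).continuousOn ?_)
    intro z hz
    exact (hKpos z hz p.1).ne'
  obtain ⟨z, hzK, hzmin⟩ := hKcompact.exists_isMinOn ⟨z0, hz0K⟩ hcont
  have hmain : ∀ w : Γ → ℝ, (∀ σ, 0 < w σ) → PhiFun c z ≤ PhiFun c w := by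
    intro w hw
    rcases le_or_gt (PhiFun c w) M with hcase | hcase
    · -- normalize w
      have hsumpos : 0 < ∑ σ : Γ, w σ ^ 2 := by
        have : Nonempty Γ := Fintype.card_pos_iff.mp (lt_trans Nat.zero_lt_one hcard)
        refine Finset.sum_pos (fun σ _ => pow_pos (hw σ) 2) ⟨Classical.arbitrary Γ,
          Finset.mem_univ _⟩
      set r : ℝ := Real.sqrt (∑ σ : Γ, w σ ^ 2) with hr_def
      have hr : 0 < r := Real.sqrt_pos.2 hsumpos
      set w' : Γ → ℝ := fun σ => w σ / r with hw'_def
      have hw'pos : ∀ σ, 0 < w' σ := fun σ => div_pos (hw σ) hr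
      have hPhiw' : PhiFun c w' = PhiFun c w := phi_scale c w r hr.ne'
      have hw'K : w' ∈ K := by
        refine ⟨fun σ => (hw'pos σ).le, ?_, ?_⟩
        · have : ∀ σ, w' σ ^ 2 = w σ ^ 2 / r ^ 2 := fun σ => by
            rw [hw'_def]; ring
          rw [Finset.sum_congr rfl fun σ _ => this σ, ← Finset.sum_div,
            Real.sq_sqrt hsumpos.le, div_self hsumpos.ne']
        · intro a b hab
          have hmem : (a, b) ∈ W := by simp [hW, hab]
          have hterm : c a b * (w' b / w' a) ≤ PhiFun c w' := by
            unfold PhiFun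
            refine Finset.single_le_sum (f := fun p : Γ × Γ => c p.1 p.2 * (w' p.2 / w' p.1))
              (fun p hp => mul_nonneg (hc p.1 p.2 (by simpa [hW] using hp))
                (div_nonneg (hw'pos p.2).le (hw'pos p.1).le)) hmem
          have h2 : c a b * (w' b / w' a) ≤ M := le_trans hterm (hPhiw' ▸ hcase)
          have h3 := mul_le_mul_of_nonneg_right h2 (hw'pos a).le
          calc c a b * w' b = c a b * (w' b / w' a) * w' a := by
                rw [mul_assoc, div_mul_cancel₀ _ (hw'pos a).ne']
            _ ≤ M * w' a := h3
      calc PhiFun c z ≤ PhiFun c w' := hzmin hw'K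
        _ = PhiFun c w := hPhiw'
    · exact le_trans (hzmin hz0K) hcase.le
  refine ⟨z, hKpos z hzK, hzK.2.1, hmain, fun w hw => ?_⟩
  rw [jhat_eq, jhat_eq]
  linarith [hmain w hw]
end

section
/- Let 𝒮 ⊂ [0,∞)^W be the set of irreducible elements, and for c ∈ 𝒮 let z̃(c) denote the unique solution in 𝒜 = {z ∈ (0,∞)^Γ : Σ_σ z_σ² = 1} of the system Σ_{σ'≠σ} c(σ,σ') z_{σ'}/z_σ = Σ_{σ'≠σ} c(σ',σ) z_σ/z_{σ'} (σ ∈ Γ). Then z̃ : 𝒮 → 𝒜 is C¹ in the sense that for every c ∈ 𝒮 there exist an open neighborhood U of c in ℝ^W and a continuously differentiable map g : U → ℝ^Γ such that g(c') = z̃(c') for every c' ∈ U ∩ 𝒮. -/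
open Finset

/-- The stationarity system
`Σ_{σ'≠σ} c(σ,σ') z_{σ'}/z_σ = Σ_{σ'≠σ} c(σ',σ) z_σ/z_{σ'}` for every `σ`. -/
def StationarySystem {Γ : Type*} [Fintype Γ] [DecidableEq Γ]
    (c : Γ → Γ → ℝ) (z : Γ → ℝ) : Prop :=
  ∀ σ : Γ, ∑ σ' ∈ Finset.univ.filter (· ≠ σ), c σ σ' * (z σ' / z σ)
      = ∑ σ' ∈ Finset.univ.filter (· ≠ σ), c σ' σ * (z σ / z σ')

section Stmt4Aux

open ContinuousLinearMap

variable {Γ : Type*} [Fintype Γ] [DecidableEq Γ]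

/-- Projection onto a rate coordinate. -/
noncomputable def stmt4Ac (a b : Γ) : ((Γ → Γ → ℝ) × (Γ → ℝ)) →L[ℝ] ℝ :=
  (proj b).comp ((proj a).comp (fst ℝ (Γ → Γ → ℝ) (Γ → ℝ)))

/-- Projection onto a state coordinate. -/
noncomputable def stmt4Bz (a : Γ) : ((Γ → Γ → ℝ) × (Γ → ℝ)) →L[ℝ] ℝ :=
  (proj a).comp (snd ℝ (Γ → Γ → ℝ) (Γ → ℝ))

@[simp] lemma stmt4Ac_apply (a b : Γ) (p : ((Γ → Γ → ℝ) × (Γ → ℝ))) :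
    stmt4Ac a b p = p.1 a b := rfl
@[simp] lemma stmt4Bz_apply (a : Γ) (p : ((Γ → Γ → ℝ) × (Γ → ℝ))) :
    stmt4Bz a p = p.2 a := rfl

lemma stmt4_offdiag_sum (f : Γ → Γ → ℝ) :
    ∑ σ, ∑ σ' ∈ Finset.univ.filter (· ≠ σ), (f σ σ' - f σ' σ) = 0 := by
  have h : ∀ g : Γ → Γ → ℝ, ∑ σ, ∑ σ' ∈ Finset.univ.filter (· ≠ σ), g σ σ'
      = ∑ σ, ∑ σ' ∈ Finset.univ.filter (· ≠ σ), g σ' σ := by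
    intro g
    rw [Finset.sum_comm' (s' := fun σ' => Finset.univ.filter (· ≠ σ')) (t' := Finset.univ)]
    intro x y
    simp [ne_comm]
  simp only [Finset.sum_sub_distrib]
  rw [h]
  ring

/-- The map whose zero set (in `z`, given `c`) captures the stationarity system plus
the normalization, indexed by `σ`, where the `σ₀` slot carries the normalization. -/
noncomputable def stmt4H (σ₀ : Γ) (p : (Γ → Γ → ℝ) × (Γ → ℝ)) (σ : Γ) : ℝ :=
  if σ = σ₀ then (∑ τ, p.2 τ ^ 2) - 1
  else ∑ σ' ∈ Finset.univ.filter (· ≠ σ),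
    (p.1 σ σ' * (p.2 σ' / p.2 σ) - p.1 σ' σ * (p.2 σ / p.2 σ'))

noncomputable def stmt4Phi (σ₀ : Γ) (p : (Γ → Γ → ℝ) × (Γ → ℝ)) :
    (Γ → Γ → ℝ) × (Γ → ℝ) := (p.1, stmt4H σ₀ p)

lemma stmt4H_hasFDerivAt (σ₀ : Γ) (c : Γ → Γ → ℝ) (z : Γ → ℝ) (hz : ∀ τ, z τ ≠ 0) (σ : Γ) :
    ∃ L : ((Γ → Γ → ℝ) × (Γ → ℝ)) →L[ℝ] ℝ,
      HasFDerivAt (fun p => stmt4H σ₀ p σ) L (c, z) ∧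
      ∀ u : Γ → Γ → ℝ, ∀ v : Γ → ℝ, L (u, v) =
        if σ = σ₀ then ∑ τ, 2 * z τ * v τ
        else ∑ σ' ∈ Finset.univ.filter (· ≠ σ),
          (u σ σ' * (z σ' / z σ) + c σ σ' * ((v σ' * z σ - z σ' * v σ) / (z σ)^2)
           - (u σ' σ * (z σ / z σ') + c σ' σ * ((v σ * z σ' - z σ * v σ') / (z σ')^2))) := by
  have hA : ∀ a b : Γ, HasFDerivAt (fun p : (Γ → Γ → ℝ) × (Γ → ℝ) => p.1 a b)
      (stmt4Ac a b) (c, z) := fun a b => (stmt4Ac a b).hasFDerivAt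
  have hB : ∀ a : Γ, HasFDerivAt (fun p : (Γ → Γ → ℝ) × (Γ → ℝ) => p.2 a)
      (stmt4Bz a) (c, z) := fun a => (stmt4Bz a).hasFDerivAt
  by_cases hσ : σ = σ₀
  · simp only [stmt4H, hσ, if_true, if_pos]
    have key := (HasFDerivAt.fun_sum (fun τ (_ : τ ∈ Finset.univ) => (hB τ).fun_mul (hB τ))).sub_const 1
    have hfun : (fun p : (Γ → Γ → ℝ) × (Γ → ℝ) => (∑ τ, p.2 τ * p.2 τ) - 1)
        = (fun p : (Γ → Γ → ℝ) × (Γ → ℝ) => (∑ τ, p.2 τ ^ 2) - 1) := by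
      funext p; simp [sq]
    rw [hfun] at key
    refine ⟨_, key, fun u v => ?_⟩
    simp only [ContinuousLinearMap.sum_apply, ContinuousLinearMap.add_apply,
      ContinuousLinearMap.smul_apply, stmt4Bz_apply, smul_eq_mul]
    exact Finset.sum_congr rfl fun τ _ => by ring
  · simp only [stmt4H, hσ, if_false, if_neg]
    have hI : ∀ a : Γ, HasFDerivAt (fun p : (Γ → Γ → ℝ) × (Γ → ℝ) => (p.2 a)⁻¹)
        ((-(z a ^ 2)⁻¹) • stmt4Bz a) (c, z) :=
      fun a => (hasDerivAt_inv (hz a)).comp_hasFDerivAt (c, z) (hB a)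
    have key := HasFDerivAt.fun_sum (fun σ' (_ : σ' ∈ Finset.univ.filter (· ≠ σ)) =>
      (((hA σ σ').fun_mul ((hB σ').fun_mul (hI σ))).fun_sub
        (((hA σ' σ).fun_mul ((hB σ).fun_mul (hI σ'))))))
    have hfun : (fun p : (Γ → Γ → ℝ) × (Γ → ℝ) =>
        ∑ σ' ∈ Finset.univ.filter (· ≠ σ),
          (p.1 σ σ' * (p.2 σ' * (p.2 σ)⁻¹) - p.1 σ' σ * (p.2 σ * (p.2 σ')⁻¹)))
        = (fun p : (Γ → Γ → ℝ) × (Γ → ℝ) =>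
        ∑ σ' ∈ Finset.univ.filter (· ≠ σ),
          (p.1 σ σ' * (p.2 σ' / p.2 σ) - p.1 σ' σ * (p.2 σ / p.2 σ'))) := by
      funext p; simp only [div_eq_mul_inv]
    rw [hfun] at key
    refine ⟨_, key, fun u v => ?_⟩
    simp only [ContinuousLinearMap.sum_apply, ContinuousLinearMap.sub_apply,
      ContinuousLinearMap.add_apply, ContinuousLinearMap.smul_apply, stmt4Ac_apply,
      stmt4Bz_apply, ContinuousLinearMap.coe_smul', Pi.smul_apply, smul_eq_mul]
    refine Finset.sum_congr rfl fun σ' hσ' => ?_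
    have h1 := hz σ
    have h2 := hz σ'
    field_simp
    ring

lemma stmt4Phi_contDiffAt (σ₀ : Γ) (c : Γ → Γ → ℝ) (z : Γ → ℝ) (hz : ∀ τ, z τ ≠ 0) :
    ContDiffAt ℝ 1 (stmt4Phi σ₀) (c, z) := by
  apply ContDiffAt.prodMk
  · exact contDiffAt_fst
  · rw [contDiffAt_pi]
    intro σ
    by_cases hσ : σ = σ₀
    · simp only [stmt4Phi, stmt4H, hσ, if_true, if_pos]
      exact (ContDiffAt.sum fun τ _ =>
        (((stmt4Bz τ).contDiff.contDiffAt (x := (c, z))).pow 2)).sub contDiffAt_const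
    · simp only [stmt4Phi, stmt4H, hσ, if_false, if_neg]
      refine ContDiffAt.sum fun σ' _ => ?_
      exact (((stmt4Ac σ σ').contDiff.contDiffAt).mul
        (((stmt4Bz σ').contDiff.contDiffAt).div ((stmt4Bz σ).contDiff.contDiffAt) (hz σ))).sub
        (((stmt4Ac σ' σ).contDiff.contDiffAt).mul
        (((stmt4Bz σ).contDiff.contDiffAt).div ((stmt4Bz σ').contDiff.contDiffAt) (hz σ')))

/-- The kernel of the linearized system (with normalization row) is trivial. -/
lemma stmt4_kernel [Nonempty Γ] (c : Γ → Γ → ℝ) (z v : Γ → ℝ)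
    (hc : ∀ σ σ' : Γ, σ ≠ σ' → 0 ≤ c σ σ') (hirr : IrreducibleRates c)
    (hz : ∀ σ, 0 < z σ) (hnorm : ∑ σ, (z σ) ^ 2 = 1)
    (hrow : ∀ σ, ∑ σ' ∈ Finset.univ.filter (· ≠ σ),
      (c σ σ' * ((v σ' * z σ - z σ' * v σ) / (z σ)^2)
        - c σ' σ * ((v σ * z σ' - z σ * v σ') / (z σ')^2)) = 0)
    (hnrow : ∑ τ, 2 * z τ * v τ = 0) : v = 0 := by
  set w : Γ → ℝ := fun τ => v τ / z τ with hw
  have hrow' : ∀ σ, ∑ σ' ∈ Finset.univ.filter (· ≠ σ),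
      ((c σ σ' * (z σ' / z σ) + c σ' σ * (z σ / z σ')) * (w σ' - w σ)) = 0 := by
    intro σ
    rw [← hrow σ]
    refine Finset.sum_congr rfl fun σ' _ => ?_
    have h1 := (hz σ).ne'
    have h2 := (hz σ').ne'
    simp only [hw]
    field_simp
    ring
  obtain ⟨τ, -, hτ⟩ := Finset.exists_max_image Finset.univ w Finset.univ_nonempty
  have step : ∀ a b : Γ, w a = w τ → 0 < c a b → w b = w τ := by
    intro a b ha hab
    by_cases hba : b = a
    · rw [hba]; exact ha
    have hterms : ∀ σ' ∈ Finset.univ.filter (· ≠ a),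
        (c a σ' * (z σ' / z a) + c σ' a * (z a / z σ')) * (w σ' - w a) ≤ 0 := by
      intro σ' h'
      have hne : σ' ≠ a := by simpa using h'
      have hfac : 0 ≤ c a σ' * (z σ' / z a) + c σ' a * (z a / z σ') := by
        have := hc a σ' (Ne.symm hne)
        have := hc σ' a hne
        have := div_pos (hz σ') (hz a)
        have := div_pos (hz a) (hz σ')
        positivity
      have hle : w σ' - w a ≤ 0 := by
        have := hτ σ' (Finset.mem_univ σ')
        rw [ha]; linarith
      exact mul_nonpos_of_nonneg_of_nonpos hfac hle
    have hzero := (Finset.sum_eq_zero_iff_of_nonpos hterms).mp (hrow' a)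
    have hb := hzero b (by simp [hba])
    have hpos : 0 < c a b * (z b / z a) + c b a * (z a / z b) := by
      have h1 : 0 < c a b * (z b / z a) := mul_pos hab (div_pos (hz b) (hz a))
      have h2 : 0 ≤ c b a * (z a / z b) :=
        mul_nonneg (hc b a hba) (div_pos (hz a) (hz b)).le
      linarith
    rcases mul_eq_zero.mp hb with h | h
    · exact absurd h hpos.ne'
    · rw [← ha]; linarith [sub_eq_zero.mp h]
  have hall : ∀ σ, w σ = w τ := by
    have haux : ∀ σ, Relation.TransGen (fun a b => 0 < c a b) τ σ → w σ = w τ := by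
      intro σ htg
      induction htg with
      | single h => exact step τ _ rfl h
      | tail _ h ih => exact step _ _ ih h
    intro σ
    by_cases hστ : σ = τ
    · rw [hστ]
    · exact haux σ (hirr τ σ (Ne.symm hστ))
  have hv : ∀ σ, v σ = w τ * z σ := fun σ => (div_eq_iff (hz σ).ne').mp (hall σ)
  have hzero : w τ = 0 := by
    have : ∑ τ' : Γ, 2 * z τ' * v τ' = 2 * w τ := by
      calc ∑ τ' : Γ, 2 * z τ' * v τ' = ∑ τ' : Γ, 2 * w τ * z τ' ^ 2 := by
            refine Finset.sum_congr rfl fun τ' _ => ?_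
            rw [hv τ']; ring
        _ = 2 * w τ * ∑ τ' : Γ, z τ' ^ 2 := by rw [Finset.mul_sum]
        _ = 2 * w τ := by rw [hnorm, mul_one]
    rw [this] at hnrow
    linarith
  funext σ
  rw [hv σ, hzero]
  simp

end Stmt4Aux

lemma stmt4_row_sigma0 {Γ : Type*} [Fintype Γ] [DecidableEq Γ] (f : Γ → Γ → ℝ) (σ₀ : Γ)
    (hrow : ∀ σ, σ ≠ σ₀ → ∑ σ' ∈ Finset.univ.filter (· ≠ σ), (f σ σ' - f σ' σ) = 0) :
    ∀ σ, ∑ σ' ∈ Finset.univ.filter (· ≠ σ), (f σ σ' - f σ' σ) = 0 := by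
  intro σ
  by_cases hσ : σ = σ₀
  · subst hσ
    have hsum := stmt4_offdiag_sum f
    set D : Γ → ℝ := fun a => ∑ σ' ∈ Finset.univ.filter (· ≠ a), (f a σ' - f σ' a) with hD
    have hsplit : ∑ a, D a = D σ + ∑ a ∈ Finset.univ.erase σ, D a :=
      (Finset.add_sum_erase Finset.univ D (Finset.mem_univ σ)).symm
    have hz : ∑ a ∈ Finset.univ.erase σ, D a = 0 :=
      Finset.sum_eq_zero fun a ha => hrow a (Finset.mem_erase.mp ha).1
    have hsum' : ∑ a, D a = 0 := hsum
    rw [hsplit, hz, add_zero] at hsum'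
    exact hsum'
  · exact hrow σ hσ

/-- let `z̃(c)` be, for each irreducible nonnegative `c`, the unique normalized
positive solution of the stationarity system. Then `z̃ : 𝒮 → 𝒜` is `C¹`: around each `c ∈ 𝒮`
there are an open neighborhood `U ⊆ ℝ^W` and a continuously differentiable map
`g : U → ℝ^Γ` which coincides with `z̃` on `U ∩ 𝒮`. -/
theorem stmt4 {Γ : Type*} [Fintype Γ] [DecidableEq Γ] (hcard : 1 < Fintype.card Γ)
    (ztilde : (Γ → Γ → ℝ) → (Γ → ℝ))
    (hzt : ∀ c : Γ → Γ → ℝ, (∀ σ σ' : Γ, σ ≠ σ' → 0 ≤ c σ σ') → IrreducibleRates c →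
      ((∀ σ, 0 < ztilde c σ) ∧ (∑ σ, (ztilde c σ) ^ 2 = 1) ∧ StationarySystem c (ztilde c)) ∧
      (∀ z : Γ → ℝ, (∀ σ, 0 < z σ) → (∑ σ, (z σ) ^ 2 = 1) → StationarySystem c z →
        z = ztilde c)) :
    ∀ c : Γ → Γ → ℝ, (∀ σ σ' : Γ, σ ≠ σ' → 0 ≤ c σ σ') → IrreducibleRates c →
      ∃ U : Set (Γ → Γ → ℝ), IsOpen U ∧ c ∈ U ∧
        ∃ g : (Γ → Γ → ℝ) → (Γ → ℝ), ContDiffOn ℝ 1 g U ∧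
          ∀ c' ∈ U, (∀ σ σ' : Γ, σ ≠ σ' → 0 ≤ c' σ σ') → IrreducibleRates c' →
            g c' = ztilde c' := by
  intro c hc hirr
  haveI : Nonempty Γ := Fintype.card_pos_iff.mp (lt_trans one_pos hcard)
  obtain ⟨⟨hpos, hnorm, hstat⟩, -⟩ := hzt c hc hirr
  set z : Γ → ℝ := ztilde c with hzdef
  have hzne : ∀ τ, z τ ≠ 0 := fun τ => (hpos τ).ne'
  set σ₀ : Γ := Classical.arbitrary Γ with hσ₀
  set p₀ : (Γ → Γ → ℝ) × (Γ → ℝ) := (c, z) with hp₀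
  -- the derivative of the extended system map
  have hD := fun σ => stmt4H_hasFDerivAt σ₀ c z hzne σ
  set Lfam : Γ → ((Γ → Γ → ℝ) × (Γ → ℝ)) →L[ℝ] ℝ := fun σ => (hD σ).choose with hLfam
  have hLspec : ∀ σ, HasFDerivAt (fun p => stmt4H σ₀ p σ) (Lfam σ) p₀ ∧
      ∀ u v, Lfam σ (u, v) =
        if σ = σ₀ then ∑ τ, 2 * z τ * v τ
        else ∑ σ' ∈ Finset.univ.filter (· ≠ σ),
          (u σ σ' * (z σ' / z σ) + c σ σ' * ((v σ' * z σ - z σ' * v σ) / (z σ)^2)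
           - (u σ' σ * (z σ / z σ') + c σ' σ * ((v σ * z σ' - z σ * v σ') / (z σ')^2))) :=
    fun σ => (hD σ).choose_spec
  set LH := ContinuousLinearMap.pi Lfam with hLH
  have hHder : HasFDerivAt (fun p => stmt4H σ₀ p) LH p₀ := by
    apply hasFDerivAt_pi''
    intro σ
    rw [hLH, ContinuousLinearMap.proj_pi]
    exact (hLspec σ).1
  set DPhi := (ContinuousLinearMap.fst ℝ (Γ → Γ → ℝ) (Γ → ℝ)).prod LH with hDPhi
  have hPhider : HasFDerivAt (stmt4Phi σ₀) DPhi p₀ := (hasFDerivAt_fst).prodMk hHder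
  -- kernel of the derivative is trivial
  have hker : ∀ x : (Γ → Γ → ℝ) × (Γ → ℝ), DPhi x = 0 → x = 0 := by
    rintro ⟨u, v⟩ hx
    have h1 : u = 0 ∧ LH (u, v) = 0 := by
      simpa [hDPhi, ContinuousLinearMap.prod_apply, Prod.ext_iff] using hx
    obtain ⟨hu, hLHv⟩ := h1
    subst hu
    have hrows : ∀ σ, Lfam σ ((0 : Γ → Γ → ℝ), v) = 0 := by
      intro σ
      have := congrFun hLHv σ
      simpa [hLH, ContinuousLinearMap.pi_apply] using this
    have hnrow : ∑ τ, 2 * z τ * v τ = 0 := by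
      have h := hrows σ₀
      rw [(hLspec σ₀).2 0 v, if_pos rfl] at h
      exact h
    have hrowNe : ∀ σ, σ ≠ σ₀ → ∑ σ' ∈ Finset.univ.filter (· ≠ σ),
        (c σ σ' * ((v σ' * z σ - z σ' * v σ) / (z σ)^2)
          - c σ' σ * ((v σ * z σ' - z σ * v σ') / (z σ')^2)) = 0 := by
      intro σ hσ
      have h := hrows σ
      rw [(hLspec σ).2 0 v, if_neg hσ] at h
      rw [← h]
      refine Finset.sum_congr rfl fun σ' _ => ?_
      simp
    have hrowAll := stmt4_row_sigma0
      (fun a b => c a b * ((v b * z a - z b * v a) / (z a)^2)) σ₀ hrowNe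
    have hv0 : v = 0 := stmt4_kernel c z v hc hirr hpos hnorm hrowAll hnrow
    rw [hv0]
    rfl
  have hinj : Function.Injective DPhi := by
    intro a b hab
    have := hker (a - b) (by rw [map_sub, hab, sub_self])
    exact sub_eq_zero.mp this
  have hbij : Function.Bijective (DPhi : ((Γ → Γ → ℝ) × (Γ → ℝ)) →ₗ[ℝ] ((Γ → Γ → ℝ) × (Γ → ℝ))) :=
    ⟨hinj, LinearMap.injective_iff_surjective.mp hinj⟩
  set e : ((Γ → Γ → ℝ) × (Γ → ℝ)) ≃L[ℝ] ((Γ → Γ → ℝ) × (Γ → ℝ)) :=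
    LinearEquiv.toContinuousLinearEquiv (LinearEquiv.ofBijective _ hbij) with he
  have hecoe : (e : ((Γ → Γ → ℝ) × (Γ → ℝ)) →L[ℝ] ((Γ → Γ → ℝ) × (Γ → ℝ))) = DPhi := by
    ext x : 1 <;> rfl
  have hder : HasFDerivAt (stmt4Phi σ₀)
      (e : ((Γ → Γ → ℝ) × (Γ → ℝ)) →L[ℝ] ((Γ → Γ → ℝ) × (Γ → ℝ))) p₀ := by
    rw [hecoe]; exact hPhider
  have hcd : ContDiffAt ℝ 1 (stmt4Phi σ₀) p₀ := stmt4Phi_contDiffAt σ₀ c z hzne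
  set ψ : ((Γ → Γ → ℝ) × (Γ → ℝ)) → ((Γ → Γ → ℝ) × (Γ → ℝ)) :=
    hcd.localInverse hder one_ne_zero with hψdef
  have hψcd : ContDiffAt ℝ 1 ψ (stmt4Phi σ₀ p₀) := hcd.to_localInverse hder one_ne_zero
  have hri : ∀ᶠ y in nhds (stmt4Phi σ₀ p₀), stmt4Phi σ₀ (ψ y) = y :=
    (hcd.hasStrictFDerivAt' hder one_ne_zero).eventually_right_inverse
  have hfix : ψ (stmt4Phi σ₀ p₀) = p₀ := hcd.localInverse_apply_image hder one_ne_zero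
  have hP0 : stmt4Phi σ₀ p₀ = (c, (0 : Γ → ℝ)) := by
    have hH0 : stmt4H σ₀ p₀ = 0 := by
      funext σ
      show stmt4H σ₀ p₀ σ = 0
      by_cases hσ : σ = σ₀
      · rw [stmt4H, if_pos hσ]
        show (∑ τ, z τ ^ 2) - 1 = 0
        rw [hnorm]; ring
      · rw [stmt4H, if_neg hσ]
        show ∑ σ' ∈ Finset.univ.filter (· ≠ σ),
          (c σ σ' * (z σ' / z σ) - c σ' σ * (z σ / z σ')) = 0
        rw [Finset.sum_sub_distrib]
        rw [hstat σ]
        ring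
    show (p₀.1, stmt4H σ₀ p₀) = (c, (0 : Γ → ℝ))
    rw [hH0]
  set g : (Γ → Γ → ℝ) → (Γ → ℝ) := fun c' => (ψ (c', (0 : Γ → ℝ))).2 with hg
  have hgc : ContDiffAt ℝ 1 g c := by
    have hmk : ContDiffAt ℝ 1 (fun c' : Γ → Γ → ℝ => (c', (0 : Γ → ℝ))) c :=
      contDiffAt_id.prodMk contDiffAt_const
    have h1 : ContDiffAt ℝ 1 ψ (c, (0 : Γ → ℝ)) := hP0 ▸ hψcd
    exact contDiffAt_snd.comp c (h1.comp c hmk)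
  obtain ⟨u₁, hu₁, hgC⟩ := hgc.contDiffOn le_rfl (by simp)
  have hgcz : g c = z := by
    have h1 : ψ (c, (0 : Γ → ℝ)) = p₀ := by rw [← hP0]; exact hfix
    show (ψ (c, (0 : Γ → ℝ))).2 = z
    rw [h1]
  -- right-inverse neighborhood
  have htd : Filter.Tendsto (fun c' : Γ → Γ → ℝ => (c', (0 : Γ → ℝ)))
      (nhds c) (nhds (c, (0 : Γ → ℝ))) :=
    (continuous_id.prodMk continuous_const).tendsto c
  have hri' : ∀ᶠ c' in nhds c, stmt4Phi σ₀ (ψ (c', (0 : Γ → ℝ))) = (c', (0 : Γ → ℝ)) :=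
    htd.eventually (hP0 ▸ hri)
  obtain ⟨t₂, ht₂p, ht₂o, ht₂c⟩ := eventually_nhds_iff.mp hri'
  -- positivity neighborhood
  have hopen : IsOpen {y : Γ → ℝ | ∀ σ, 0 < y σ} := by
    have : {y : Γ → ℝ | ∀ σ, 0 < y σ} = ⋂ σ, {y : Γ → ℝ | 0 < y σ} := by ext; simp
    rw [this]
    exact isOpen_iInter_of_finite fun σ => isOpen_lt continuous_const (continuous_apply σ)
  have hev : ∀ᶠ c' in nhds c, ∀ σ, 0 < g c' σ := by
    have hmem : {y : Γ → ℝ | ∀ σ, 0 < y σ} ∈ nhds (g c) :=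
      hopen.mem_nhds (by rw [hgcz]; exact hpos)
    exact hgc.continuousAt.eventually_mem hmem
  obtain ⟨t₃, ht₃p, ht₃o, ht₃c⟩ := eventually_nhds_iff.mp hev
  refine ⟨interior u₁ ∩ (t₂ ∩ t₃), (isOpen_interior.inter (ht₂o.inter ht₃o)),
    ⟨mem_interior_iff_mem_nhds.mpr hu₁, ht₂c, ht₃c⟩, g,
    (hgC.mono (Set.inter_subset_left.trans interior_subset)), ?_⟩
  intro c' hc'U hc'nn hirr'
  obtain ⟨-, huniq'⟩ := hzt c' hc'nn hirr'
  have hq : stmt4Phi σ₀ (ψ (c', (0 : Γ → ℝ))) = (c', (0 : Γ → ℝ)) := ht₂p c' hc'U.2.1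
  have hq1 : (ψ (c', (0 : Γ → ℝ))).1 = c' := congrArg Prod.fst hq
  have hq2 : stmt4H σ₀ (ψ (c', (0 : Γ → ℝ))) = 0 := congrArg Prod.snd hq
  have hqeq : ψ (c', (0 : Γ → ℝ)) = (c', g c') := by
    have : ψ (c', (0 : Γ → ℝ)) = ((ψ (c', (0 : Γ → ℝ))).1, (ψ (c', (0 : Γ → ℝ))).2) := rfl
    rw [this, hq1]
  have hH : ∀ σ, stmt4H σ₀ (c', g c') σ = 0 := by
    intro σ
    rw [← hqeq]
    exact congrFun hq2 σ
  have hgpos : ∀ σ, 0 < g c' σ := ht₃p c' hc'U.2.2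
  have hnorm' : ∑ σ, (g c' σ) ^ 2 = 1 := by
    have h := hH σ₀
    rw [stmt4H, if_pos rfl] at h
    have : (∑ τ, g c' τ ^ 2) - 1 = 0 := h
    linarith
  have hFh0 : ∀ σ, σ ≠ σ₀ → ∑ σ' ∈ Finset.univ.filter (· ≠ σ),
      (c' σ σ' * (g c' σ' / g c' σ) - c' σ' σ * (g c' σ / g c' σ')) = 0 := by
    intro σ hσ
    have h := hH σ
    rwa [stmt4H, if_neg hσ] at h
  have hFhAll := stmt4_row_sigma0 (fun a b => c' a b * (g c' b / g c' a)) σ₀ hFh0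
  have hstat' : StationarySystem c' (g c') := by
    intro σ
    have h := hFhAll σ
    rw [Finset.sum_sub_distrib] at h
    exact sub_eq_zero.mp h
  exact huniq' (g c') hgpos hnorm' hstat'
end

section
/- Let r : W → [0,∞) be irreducible jump rates on the finite set Γ, let μ be a strictly positive probability measure on Γ satisfying the detailed balance (reversibility) condition μ(σ) r(σ,σ') = μ(σ') r(σ',σ) for all (σ,σ') ∈ W, and let π be a strictly positive measure on Γ. Then the supremum j(π,r) := sup_{z ∈ (0,∞)^Γ} Σ_{(σ,σ')∈W} π(σ) r(σ,σ')(1 − z_{σ'}/z_σ) is attained at z with z_σ proportional to √(π(σ)/μ(σ)), and j(π,r) = Σ_{(σ,σ')∈W} π(σ) r(σ,σ') (1 − √( π(σ') μ(σ) / (π(σ) μ(σ')) )). -/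
open Finset

/-- for irreducible rates `r`, a strictly positive reversible probability `μ`,
and a strictly positive measure `π`, the supremum
`j(π,r) = sup_{z ∈ (0,∞)^Γ} Σ_{(σ,σ')∈W} π(σ) r(σ,σ')(1 − z_{σ'}/z_σ)` is attained at
`z_σ = √(π(σ)/μ(σ))` and equals
`Σ_{(σ,σ')∈W} π(σ) r(σ,σ') (1 − √(π(σ')μ(σ)/(π(σ)μ(σ'))))`. -/
theorem stmt6 {Γ : Type*} [Fintype Γ] [DecidableEq Γ] (hcard : 1 < Fintype.card Γ)
    (r : Γ → Γ → ℝ) (hr : ∀ σ σ' : Γ, σ ≠ σ' → 0 ≤ r σ σ')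
    (hirr : ∀ σ σ' : Γ, σ ≠ σ' → Relation.TransGen (fun a b => 0 < r a b) σ σ')
    (μ : Γ → ℝ) (hμpos : ∀ σ, 0 < μ σ) (hμsum : ∑ σ, μ σ = 1)
    (hrev : ∀ σ σ' : Γ, σ ≠ σ' → μ σ * r σ σ' = μ σ' * r σ' σ)
    (π : Γ → ℝ) (hπ : ∀ σ, 0 < π σ) :
    (∀ z : Γ → ℝ, (∀ σ, 0 < z σ) →
        Jhat (fun σ σ' => π σ * r σ σ') z
          ≤ Jhat (fun σ σ' => π σ * r σ σ') (fun σ => Real.sqrt (π σ / μ σ))) ∧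
    Jfun (fun σ σ' => π σ * r σ σ')
      = ∑ p ∈ Finset.univ.filter (fun p : Γ × Γ => p.1 ≠ p.2),
          π p.1 * r p.1 p.2 * (1 - Real.sqrt (π p.2 * μ p.1 / (π p.1 * μ p.2))) := by
  classical
  set c : Γ → Γ → ℝ := fun σ σ' => π σ * r σ σ' with hc
  set zs : Γ → ℝ := fun σ => Real.sqrt (π σ / μ σ) with hzs
  set W : Finset (Γ × Γ) := Finset.univ.filter (fun p : Γ × Γ => p.1 ≠ p.2) with hW
  have hWmem : ∀ p : Γ × Γ, p ∈ W ↔ p.1 ≠ p.2 := by intro p; simp [hW]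
  have hzspos : ∀ σ, 0 < zs σ := fun σ =>
    Real.sqrt_pos.mpr (div_pos (hπ σ) (hμpos σ))
  -- the ratio of zs
  have hratio : ∀ σ σ' : Γ, zs σ' / zs σ = Real.sqrt (π σ' * μ σ / (π σ * μ σ')) := by
    intro σ σ'
    rw [hzs]
    rw [← Real.sqrt_div (le_of_lt (div_pos (hπ σ') (hμpos σ')))]
    congr 1
    field_simp
  -- g p := sqrt (c p.1 p.2 * c p.2 p.1)
  have hcnonneg : ∀ p : Γ × Γ, p.1 ≠ p.2 → 0 ≤ c p.1 p.2 := fun p hp =>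
    mul_nonneg (le_of_lt (hπ p.1)) (hr p.1 p.2 hp)
  -- key1 : value at zs equals sqrt(c12 c21)
  have key1 : ∀ p : Γ × Γ, p.1 ≠ p.2 →
      c p.1 p.2 * (zs p.2 / zs p.1) = Real.sqrt (c p.1 p.2 * c p.2 p.1) := by
    rintro ⟨σ, σ'⟩ hp
    show π σ * r σ σ' * (zs σ' / zs σ) = Real.sqrt (π σ * r σ σ' * (π σ' * r σ' σ))
    have hr21 : r σ' σ = μ σ * r σ σ' / μ σ' := by
      rw [eq_div_iff (hμpos σ').ne']
      linarith [hrev σ σ' hp]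
    rw [hratio, hr21]
    have hin : π σ * r σ σ' * (π σ' * (μ σ * r σ σ' / μ σ')) =
        (π σ * π σ' * μ σ / μ σ') * (r σ σ')^2 := by
      field_simp [(hμpos σ').ne']
    rw [hin, Real.sqrt_mul (div_nonneg (mul_nonneg (mul_nonneg (hπ σ).le (hπ σ').le) (hμpos σ).le) (hμpos σ').le), Real.sqrt_sq (hr σ σ' hp)]
    have h1 : π σ * r σ σ' * Real.sqrt (π σ' * μ σ / (π σ * μ σ')) =
        r σ σ' * (Real.sqrt ((π σ)^2) * Real.sqrt (π σ' * μ σ / (π σ * μ σ'))) := by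
      rw [Real.sqrt_sq (le_of_lt (hπ σ))]; ring
    rw [h1, ← Real.sqrt_mul (by positivity)]
    rw [show (π σ)^2 * (π σ' * μ σ / (π σ * μ σ')) = π σ * π σ' * μ σ / μ σ' by
      field_simp [(hπ σ).ne', (hμpos σ').ne']]
    ring
  -- key2 : AM-GM bound
  have key2 : ∀ (z : Γ → ℝ), (∀ σ, 0 < z σ) → ∀ p : Γ × Γ, p.1 ≠ p.2 →
      2 * Real.sqrt (c p.1 p.2 * c p.2 p.1) ≤
        c p.1 p.2 * (z p.2 / z p.1) + c p.2 p.1 * (z p.1 / z p.2) := by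
    intro z hz p hp
    have h1 : 0 ≤ c p.1 p.2 * (z p.2 / z p.1) :=
      mul_nonneg (hcnonneg p hp) (le_of_lt (div_pos (hz p.2) (hz p.1)))
    have h2 : 0 ≤ c p.2 p.1 * (z p.1 / z p.2) :=
      mul_nonneg (hcnonneg p.swap (Ne.symm hp)) (le_of_lt (div_pos (hz p.1) (hz p.2)))
    have hab : Real.sqrt (c p.1 p.2 * (z p.2 / z p.1)) *
        Real.sqrt (c p.2 p.1 * (z p.1 / z p.2)) = Real.sqrt (c p.1 p.2 * c p.2 p.1) := by
      rw [← Real.sqrt_mul h1]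
      congr 1
      have hz1 := (hz p.1).ne'
      have hz2 := (hz p.2).ne'
      field_simp
    have := two_mul_le_add_sq (Real.sqrt (c p.1 p.2 * (z p.2 / z p.1)))
      (Real.sqrt (c p.2 p.1 * (z p.1 / z p.2)))
    rw [Real.sq_sqrt h1, Real.sq_sqrt h2] at this
    nlinarith [hab]
  -- swap sum lemma
  have hswapsum : ∀ f : Γ × Γ → ℝ, ∑ p ∈ W, f p = ∑ p ∈ W, f p.swap := by
    intro f
    apply Finset.sum_equiv (Equiv.prodComm Γ Γ)
    · intro p; simp [hWmem]; exact ne_comm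
    · intro p _; rfl
  -- the main inequality
  have main : ∀ z : Γ → ℝ, (∀ σ, 0 < z σ) → Jhat c z ≤ Jhat c zs := by
    intro z hz
    have hJ : ∀ w : Γ → ℝ, Jhat c w = ∑ p ∈ W, c p.1 p.2 - ∑ p ∈ W, c p.1 p.2 * (w p.2 / w p.1) := by
      intro w
      rw [Jhat, ← Finset.sum_sub_distrib]
      apply Finset.sum_congr rfl
      intro p _; ring
    rw [hJ, hJ]
    have hzsval : ∑ p ∈ W, c p.1 p.2 * (zs p.2 / zs p.1) =
        ∑ p ∈ W, Real.sqrt (c p.1 p.2 * c p.2 p.1) :=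
      Finset.sum_congr rfl (fun p hp => key1 p ((hWmem p).mp hp))
    rw [hzsval]
    have h2 : ∑ p ∈ W, 2 * Real.sqrt (c p.1 p.2 * c p.2 p.1) ≤
        ∑ p ∈ W, (c p.1 p.2 * (z p.2 / z p.1) + c p.2 p.1 * (z p.1 / z p.2)) :=
      Finset.sum_le_sum (fun p hp => key2 z hz p ((hWmem p).mp hp))
    have h3 : ∑ p ∈ W, (c p.1 p.2 * (z p.2 / z p.1) + c p.2 p.1 * (z p.1 / z p.2)) =
        2 * ∑ p ∈ W, c p.1 p.2 * (z p.2 / z p.1) := by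
      have hs := hswapsum (fun p => c p.1 p.2 * (z p.2 / z p.1))
      simp only [Prod.fst_swap, Prod.snd_swap] at hs
      rw [Finset.sum_add_distrib, ← hs]
      ring
    rw [h3, ← Finset.mul_sum] at h2
    linarith
  refine ⟨main, ?_⟩
  -- the value of the sup
  have hval : Jhat c zs = ∑ p ∈ W,
      π p.1 * r p.1 p.2 * (1 - Real.sqrt (π p.2 * μ p.1 / (π p.1 * μ p.2))) := by
    rw [Jhat]
    apply Finset.sum_congr rfl
    intro p _
    rw [hratio p.1 p.2]
  rw [← hval, Jfun]
  have hne : Nonempty {z : Γ → ℝ // ∀ σ, 0 < z σ} := ⟨⟨fun _ => 1, fun _ => one_pos⟩⟩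
  apply le_antisymm
  · exact ciSup_le (fun z => main z.1 z.2)
  · exact le_ciSup (f := fun z : {z : Γ → ℝ // ∀ σ, 0 < z σ} => Jhat c z.1)
      ⟨Jhat c zs, by rintro x ⟨z, rfl⟩; exact main z.1 z.2⟩ ⟨zs, hzspos⟩
end

section
/- In the setting where each F_σ : ℝ^d × [0,T] → ℝ^d is continuous, locally Lipschitz in x uniformly in t, and satisfies |F_σ(x,t)| ≤ κ₁ + κ₂|x|: let ρ^{(n)}, ρ : [0,T] → [0,1]^Γ be measurable with Σ_σ ρ^{(n)}_σ(t) = 1 and Σ_σ ρ_σ(t) = 1 almost everywhere, and suppose that for each σ ∈ Γ, sup_{t∈[0,T]} | ∫₀^t (ρ^{(n)}_σ(s) − ρ_σ(s)) ds | → 0 as n → ∞. Let x^{(n)} and x be the unique continuous solutions of the integral equations y(t) = x₀ + Σ_σ ∫₀^t F_σ(y(s),s) ρ^{(n)}_σ(s) ds and y(t) = x₀ + Σ_σ ∫₀^t F_σ(y(s),s) ρ_σ(s) ds respectively. Then x^{(n)} → x uniformly on [0,T]. -/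
open Set MeasureTheory intervalIntegral Filter


section helpers
variable {E : Type*} [NormedAddCommGroup E] [NormedSpace ℝ E]


variable {E : Type*} [NormedAddCommGroup E] [NormedSpace ℝ E]

lemma myIntOn {T : ℝ} {g : ℝ → E} (hg : ContinuousOn g (Icc 0 T))
    {h : ℝ → ℝ} (hh : Measurable h) (hb : ∀ s ∈ Icc (0:ℝ) T, |h s| ≤ 1) :
    IntegrableOn (fun s => h s • g s) (Icc 0 T) volume := by
  obtain ⟨M, hM⟩ := isCompact_Icc.exists_bound_of_continuousOn hg
  have hmeas : AEStronglyMeasurable (fun s => h s • g s) (volume.restrict (Icc 0 T)) :=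
    (hh.aestronglyMeasurable (μ := volume.restrict (Icc 0 T))).smul
      (hg.aestronglyMeasurable measurableSet_Icc)
  have hconst : IntegrableOn (fun _ : ℝ => M) (Icc 0 T) volume :=
    integrableOn_const measure_Icc_lt_top.ne
  refine Integrable.mono' hconst hmeas ?_
  filter_upwards [ae_restrict_mem measurableSet_Icc] with s hs
  calc ‖h s • g s‖ = |h s| * ‖g s‖ := by rw [norm_smul, Real.norm_eq_abs]
  _ ≤ 1 * M := by
      have := hM s hs
      exact mul_le_mul (hb s hs) this (norm_nonneg _) zero_le_one
  _ = M := one_mul M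

lemma myII {T a b : ℝ} {f : ℝ → E} (hf : IntegrableOn f (Icc 0 T) volume)
    (ha : 0 ≤ a) (hab : a ≤ b) (hb : b ≤ T) : IntervalIntegrable f volume a b := by
  refine (hf.mono_set ?_).intervalIntegrable
  rw [uIcc_of_le hab]
  exact Icc_subset_Icc ha hb


/-- FTC: right derivative of the primitive of a function continuous on `[0,T]`. -/
lemma myFTC {T : ℝ} {φ : ℝ → ℝ} (hφ : ContinuousOn φ (Icc 0 T))
    {t : ℝ} (ht : t ∈ Ico (0:ℝ) T) :
    HasDerivWithinAt (fun u => ∫ s in (0:ℝ)..u, φ s) (φ t) (Ici t) t := by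
  haveI : Fact (t ∈ Icc (0:ℝ) T) := ⟨⟨ht.1, ht.2.le⟩⟩
  have hint : IntervalIntegrable φ volume 0 t := by
    refine ((hφ.mono (Icc_subset_Icc le_rfl ht.2.le)).integrableOn_Icc.mono_set ?_).intervalIntegrable
    rw [uIcc_of_le ht.1]
  have hd : HasDerivWithinAt (fun u => ∫ s in (0:ℝ)..u, φ s) (φ t) (Icc 0 T) t :=
    integral_hasDerivWithinAt_right hint
      (hφ.stronglyMeasurableAtFilter_nhdsWithin measurableSet_Icc t)
      (hφ t ⟨ht.1, ht.2.le⟩)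
  refine hd.mono_of_mem_nhdsWithin ?_
  have : Iio T ∈ nhdsWithin t (Ici t) := nhdsWithin_le_nhds (Iio_mem_nhds ht.2)
  filter_upwards [this, self_mem_nhdsWithin] with u hu hu'
  exact ⟨le_trans ht.1 hu', hu.le⟩

/-- Integral form of Grönwall's inequality. -/
lemma myGron {T A B : ℝ} {φ : ℝ → ℝ} (hφ : ContinuousOn φ (Icc 0 T))
    (hφ0 : ∀ t ∈ Icc (0:ℝ) T, 0 ≤ φ t) (hA : 0 ≤ A) (hB : 0 ≤ B)
    (h : ∀ t ∈ Icc (0:ℝ) T, φ t ≤ A + B * ∫ s in (0:ℝ)..t, φ s) :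
    ∀ t ∈ Icc (0:ℝ) T, φ t ≤ A * Real.exp (B * T) := by
  intro t ht
  have hT : (0:ℝ) ≤ T := le_trans ht.1 ht.2
  -- the primitive
  set Φ : ℝ → ℝ := fun u => ∫ s in (0:ℝ)..u, φ s with hΦ
  have hΦcont : ContinuousOn Φ (Icc 0 T) := by
    have hint : IntegrableOn φ (uIcc 0 T) volume := by
      rw [uIcc_of_le hT]; exact hφ.integrableOn_Icc
    have := intervalIntegral.continuousOn_primitive_interval hint
    rwa [uIcc_of_le hT] at this
  have key : ∀ u ∈ Icc (0:ℝ) T, ‖Φ u‖ ≤ gronwallBound 0 B A (u - 0) := by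
    refine norm_le_gronwallBound_of_norm_deriv_right_le hΦcont
      (fun u hu => myFTC hφ hu) (by simp [hΦ]) ?_
    intro u hu
    have hu' : u ∈ Icc (0:ℝ) T := ⟨hu.1, hu.2.le⟩
    have h1 : ‖φ u‖ = φ u := Real.norm_of_nonneg (hφ0 u hu')
    have h2 : Φ u ≤ ‖Φ u‖ := le_abs_self _
    calc ‖φ u‖ = φ u := h1
      _ ≤ A + B * Φ u := h u hu'
      _ ≤ A + B * ‖Φ u‖ := by nlinarith
      _ = B * ‖Φ u‖ + A := by ring
  have hΦle : Φ t ≤ gronwallBound 0 B A t := by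
    have := key t ht
    simpa using le_trans (le_abs_self _) this
  have hgb : A + B * gronwallBound 0 B A t = A * Real.exp (B * t) := by
    rcases eq_or_ne B 0 with hB0 | hB0
    · simp [hB0, gronwallBound_K0]
    · rw [gronwallBound_of_K_ne_0 hB0]
      field_simp
      ring
  calc φ t ≤ A + B * Φ t := h t ht
    _ ≤ A + B * gronwallBound 0 B A t := by nlinarith
    _ = A * Real.exp (B * t) := hgb
    _ ≤ A * Real.exp (B * T) := by
        have := Real.exp_le_exp.2 (mul_le_mul_of_nonneg_left ht.2 hB)
        exact mul_le_mul_of_nonneg_left this hA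

/-- key weak-convergence lemma -/
lemma myKey [CompleteSpace E] {T : ℝ} (hT : 0 < T) {g : ℝ → E} (hg : ContinuousOn g (Icc 0 T))
    {h : ℕ → ℝ → ℝ} (hme : ∀ n, Measurable (h n)) (hbd : ∀ n, ∀ s ∈ Icc (0:ℝ) T, |h n s| ≤ 1)
    (hH : Tendsto (fun n => ⨆ t : Icc (0:ℝ) T, |∫ s in (0:ℝ)..(t:ℝ), h n s|) atTop (nhds 0))
    {ε : ℝ} (hε : 0 < ε) :
    ∀ᶠ n in atTop, ∀ t ∈ Icc (0:ℝ) T, ‖∫ s in (0:ℝ)..t, h n s • g s‖ ≤ ε := by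
  obtain ⟨M, hM⟩ := isCompact_Icc.exists_bound_of_continuousOn hg
  have hM0 : 0 ≤ M := le_trans (norm_nonneg _) (hM 0 ⟨le_rfl, hT.le⟩)
  set ε' : ℝ := ε / (2 * T) with hε'
  have hε'pos : 0 < ε' := div_pos hε (by linarith)
  -- uniform continuity
  have hug : ∃ δ > 0, ∀ u ∈ Icc (0:ℝ) T, ∀ v ∈ Icc (0:ℝ) T, dist u v < δ → dist (g u) (g v) < ε' := by
    have := (isCompact_Icc.uniformContinuousOn_of_continuous hg)
    rw [Metric.uniformContinuousOn_iff] at this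
    obtain ⟨δ, hδ, hδ'⟩ := this ε' hε'pos
    exact ⟨δ, hδ, fun u hu v hv huv => hδ' u hu v hv huv⟩
  obtain ⟨δ, hδpos, hδ⟩ := hug
  -- the partition size
  obtain ⟨k, hk⟩ : ∃ k : ℕ, T / δ < k := exists_nat_gt (T / δ)
  have hk0 : 0 < k := by
    have h1 : 0 < T / δ := div_pos hT hδpos
    have : (0:ℝ) < k := lt_trans h1 hk
    exact_mod_cast this
  set c : ℝ := T / k with hc
  have hcpos : 0 < c := div_pos hT (by exact_mod_cast hk0)
  have hcδ : c < δ := by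
    rw [hc, div_lt_iff₀ (by exact_mod_cast hk0)]
    calc T = (T / δ) * δ := by field_simp
    _ < k * δ := by exact mul_lt_mul_of_pos_right hk hδpos
    _ = δ * k := mul_comm _ _
  set ε₂ : ℝ := ε / (4 * k * M + 2) with hε₂
  have hε₂pos : 0 < ε₂ := by
    apply div_pos hε
    have : (0:ℝ) ≤ k := by positivity
    nlinarith
  -- eventual smallness of primitives
  have hev : ∀ᶠ n in atTop, ∀ t ∈ Icc (0:ℝ) T, |∫ s in (0:ℝ)..t, h n s| ≤ ε₂ := by
    filter_upwards [hH.eventually (gt_mem_nhds hε₂pos)] with n hn t ht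
    have hbdd : BddAbove (Set.range fun t : Icc (0:ℝ) T => |∫ s in (0:ℝ)..(t:ℝ), h n s|) := by
      refine ⟨T, ?_⟩
      rintro y ⟨⟨u, hu⟩, rfl⟩
      have := intervalIntegral.norm_integral_le_of_norm_le_const
        (C := 1) (f := h n) (a := 0) (b := u) ?_
      · simpa [abs_of_nonneg hu.1, hu.1] using this.trans (by simp [abs_of_nonneg hu.1, hu.2])
      · intro s hs
        rw [uIoc_of_le hu.1] at hs
        exact hbd n s ⟨hs.1.le, hs.2.trans hu.2⟩
    have hle : |∫ s in (0:ℝ)..t, h n s| ≤ ⨆ t : Icc (0:ℝ) T, |∫ s in (0:ℝ)..(t:ℝ), h n s| :=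
      le_ciSup hbdd ⟨t, ht⟩
    exact hle.trans hn.le
  filter_upwards [hev] with n hn t ht
  set u : ℕ → ℝ := fun i => min (i * c) t with hu
  have hu0 : u 0 = 0 := by simp [hu, ht.1]
  have hukT : (k:ℝ) * c = T := by rw [hc]; field_simp [(by exact_mod_cast hk0.ne' : (k:ℝ) ≠ 0)]
  have huk : u k = t := by simp [hu, hukT, min_eq_right ht.2]
  have humono : ∀ i : ℕ, u i ≤ u (i + 1) := by
    intro i
    refine min_le_min ?_ le_rfl
    have : (i:ℝ) ≤ (i:ℝ) + 1 := by linarith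
    push_cast
    nlinarith
  have humem : ∀ i : ℕ, u i ∈ Icc (0:ℝ) T := by
    intro i
    constructor
    · exact le_min (by positivity) ht.1
    · exact le_trans (min_le_right _ _) ht.2
  have hdiff : ∀ i : ℕ, u (i + 1) - u i ≤ c := by
    intro i
    have h1 : u (i + 1) ≤ min ((i:ℝ) * c + c) (t + c) := by
      refine min_le_min (by push_cast; nlinarith) (by linarith)
    rw [min_add_add_right] at h1
    linarith [show u (i + 1) ≤ u i + c from h1]
  -- integrability of pieces
  have hpint : ∀ g' : ℝ → E, ContinuousOn g' (Icc 0 T) → ∀ i : ℕ,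
      IntervalIntegrable (fun s => h n s • g' s) volume (u i) (u (i + 1)) := by
    intro g' hg' i
    exact myII (myIntOn hg' (hme n) (hbd n)) (humem i).1 (humono i) (humem (i + 1)).2
  have hhn_int : IntegrableOn (h n) (Icc 0 T) volume := by
    have := myIntOn (E := ℝ) (g := fun _ => (1:ℝ)) continuousOn_const (hme n) (hbd n)
    simpa [smul_eq_mul] using this
  -- split the integral
  have hsplit : (∫ s in (0:ℝ)..t, h n s • g s) =
      ∑ i ∈ Finset.range k, ∫ s in u i..u (i + 1), h n s • g s := by
    rw [intervalIntegral.sum_integral_adjacent_intervals (fun i _ => hpint g hg i), hu0, huk]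
  -- the per-piece bound
  have hpiece : ∀ i : ℕ, ‖∫ s in u i..u (i + 1), h n s • g s‖ ≤
      ε' * (u (i + 1) - u i) + 2 * ε₂ * M := by
    intro i
    have hgc : ContinuousOn (fun s => g s - g (u i)) (Icc 0 T) := hg.sub continuousOn_const
    have hInth : ∀ j : ℕ, IntervalIntegrable (h n) volume 0 (u j) := fun j =>
      myII hhn_int le_rfl (humem j).1 (humem j).2
    have e1 : (∫ s in u i..u (i + 1), h n s • g s) =
        (∫ s in u i..u (i + 1), h n s • (g s - g (u i))) +
          (∫ s in u i..u (i + 1), h n s) • g (u i) := by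
      rw [← intervalIntegral.integral_smul_const, ← intervalIntegral.integral_add
        (hpint _ hgc i) (hpint (fun _ => g (u i)) continuousOn_const i)]
      congr 1
      funext s
      rw [smul_sub]
      abel
    have b1 : ‖∫ s in u i..u (i + 1), h n s • (g s - g (u i))‖ ≤ ε' * (u (i + 1) - u i) := by
      have := intervalIntegral.norm_integral_le_of_norm_le_const (C := ε')
        (f := fun s => h n s • (g s - g (u i))) (a := u i) (b := u (i + 1)) ?_
      · rwa [abs_of_nonneg (by linarith [humono i])] at this
      · intro s hs
        rw [uIoc_of_le (humono i)] at hs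
        have hsmem : s ∈ Icc (0:ℝ) T :=
          ⟨le_trans (humem i).1 hs.1.le, le_trans hs.2 (humem (i + 1)).2⟩
        have hdist : dist s (u i) < δ := by
          rw [Real.dist_eq, abs_of_nonneg (by linarith [hs.1.le])]
          have := hdiff i
          linarith [hs.2]
        have hgg : ‖g s - g (u i)‖ < ε' := by
          rw [← dist_eq_norm]
          exact hδ s hsmem (u i) (humem i) hdist
        calc ‖h n s • (g s - g (u i))‖ = |h n s| * ‖g s - g (u i)‖ := by
              rw [norm_smul, Real.norm_eq_abs]
          _ ≤ 1 * ε' := mul_le_mul (hbd n s hsmem) hgg.le (norm_nonneg _) zero_le_one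
          _ = ε' := one_mul _
    have b2 : ‖(∫ s in u i..u (i + 1), h n s) • g (u i)‖ ≤ 2 * ε₂ * M := by
      have heq : (∫ s in u i..u (i + 1), h n s) =
          (∫ s in (0:ℝ)..u (i + 1), h n s) - ∫ s in (0:ℝ)..u i, h n s :=
        (intervalIntegral.integral_interval_sub_left (hInth (i + 1)) (hInth i)).symm
      have habs : |∫ s in u i..u (i + 1), h n s| ≤ 2 * ε₂ := by
        rw [heq]
        calc |(∫ s in (0:ℝ)..u (i + 1), h n s) - ∫ s in (0:ℝ)..u i, h n s| ≤
            |∫ s in (0:ℝ)..u (i + 1), h n s| + |∫ s in (0:ℝ)..u i, h n s| := abs_sub _ _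
          _ ≤ ε₂ + ε₂ := add_le_add (hn _ (humem (i + 1))) (hn _ (humem i))
          _ = 2 * ε₂ := by ring
      calc ‖(∫ s in u i..u (i + 1), h n s) • g (u i)‖
          = |∫ s in u i..u (i + 1), h n s| * ‖g (u i)‖ := by rw [norm_smul, Real.norm_eq_abs]
        _ ≤ (2 * ε₂) * M := mul_le_mul habs (hM _ (humem i)) (norm_nonneg _) (by linarith)
        _ = 2 * ε₂ * M := by ring
    calc ‖∫ s in u i..u (i + 1), h n s • g s‖ ≤
        ‖∫ s in u i..u (i + 1), h n s • (g s - g (u i))‖ +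
          ‖(∫ s in u i..u (i + 1), h n s) • g (u i)‖ := by rw [e1]; exact norm_add_le _ _
      _ ≤ ε' * (u (i + 1) - u i) + 2 * ε₂ * M := add_le_add b1 b2
  -- sum up
  have hsum : ‖∫ s in (0:ℝ)..t, h n s • g s‖ ≤ ε' * t + k * (2 * ε₂ * M) := by
    rw [hsplit]
    calc ‖∑ i ∈ Finset.range k, ∫ s in u i..u (i + 1), h n s • g s‖ ≤
        ∑ i ∈ Finset.range k, ‖∫ s in u i..u (i + 1), h n s • g s‖ := norm_sum_le _ _
      _ ≤ ∑ i ∈ Finset.range k, (ε' * (u (i + 1) - u i) + 2 * ε₂ * M) :=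
          Finset.sum_le_sum fun i _ => hpiece i
      _ = ε' * (u k - u 0) + k * (2 * ε₂ * M) := by
          rw [Finset.sum_add_distrib, ← Finset.mul_sum, Finset.sum_range_sub,
            Finset.sum_const, Finset.card_range, nsmul_eq_mul]
      _ = ε' * t + k * (2 * ε₂ * M) := by rw [hu0, huk, sub_zero]
  have h1 : ε' * t ≤ ε / 2 := by
    have : ε' * t ≤ ε' * T := mul_le_mul_of_nonneg_left ht.2 hε'pos.le
    calc ε' * t ≤ ε' * T := this
      _ = ε / 2 := by rw [hε', div_mul_eq_mul_div, div_eq_div_iff (by positivity) two_ne_zero]; ring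
  have h2 : (k:ℝ) * (2 * ε₂ * M) ≤ ε / 2 := by
    have hk' : (0:ℝ) < k := by exact_mod_cast hk0
    have hden : (0:ℝ) < 4 * ↑k * M + 2 := by nlinarith
    calc (k:ℝ) * (2 * ε₂ * M) = (2 * ↑k * M * ε) / (4 * ↑k * M + 2) := by rw [hε₂]; ring
      _ ≤ ε / 2 := by rw [div_le_div_iff₀ hden two_pos]; nlinarith
  linarith [hsum]

end helpers

/-- continuity of the map `ρ ↦ x`. If `ρ^{(n)} → ρ` in the sense that
`sup_{t∈[0,T]} |∫₀^t (ρ^{(n)}_σ − ρ_σ)| → 0` for each `σ`, then the corresponding solutions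
of the integral equations converge uniformly on `[0,T]`. -/
theorem stmt12 {Γ : Type*} [Fintype Γ] (d : ℕ) (T κ₁ κ₂ : ℝ)
    (hT : 0 < T) (hκ₁ : 0 < κ₁) (hκ₂ : 0 < κ₂)
    (F : Γ → EuclideanSpace ℝ (Fin d) → ℝ → EuclideanSpace ℝ (Fin d))
    (hFcont : ∀ σ : Γ, ContinuousOn (fun p : EuclideanSpace ℝ (Fin d) × ℝ => F σ p.1 p.2)
      (Set.univ ×ˢ Set.Icc 0 T))
    (hFlip : ∀ σ : Γ, ∀ K : Set (EuclideanSpace ℝ (Fin d)), IsCompact K → ∃ L : ℝ,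
      ∀ x ∈ K, ∀ y ∈ K, ∀ t ∈ Set.Icc (0:ℝ) T, ‖F σ x t - F σ y t‖ ≤ L * ‖x - y‖)
    (hFgrow : ∀ σ : Γ, ∀ x : EuclideanSpace ℝ (Fin d), ∀ t ∈ Set.Icc (0:ℝ) T,
      ‖F σ x t‖ ≤ κ₁ + κ₂ * ‖x‖)
    (x₀ : EuclideanSpace ℝ (Fin d))
    (ρn : ℕ → ℝ → Γ → ℝ) (ρ : ℝ → Γ → ℝ)
    (hρnmeas : ∀ n, ∀ σ : Γ, Measurable fun t => ρn n t σ)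
    (hρmeas : ∀ σ : Γ, Measurable fun t => ρ t σ)
    (hρnmem : ∀ n, ∀ t ∈ Set.Icc (0:ℝ) T, ∀ σ : Γ, ρn n t σ ∈ Set.Icc (0:ℝ) 1)
    (hρmem : ∀ t ∈ Set.Icc (0:ℝ) T, ∀ σ : Γ, ρ t σ ∈ Set.Icc (0:ℝ) 1)
    (hρnsum : ∀ n, ∀ᵐ t ∂(volume.restrict (Set.Icc (0:ℝ) T)), ∑ σ : Γ, ρn n t σ = 1)
    (hρsum : ∀ᵐ t ∂(volume.restrict (Set.Icc (0:ℝ) T)), ∑ σ : Γ, ρ t σ = 1)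
    (hconv : ∀ σ : Γ,
      Filter.Tendsto
        (fun n => ⨆ t : Set.Icc (0:ℝ) T, |∫ s in (0:ℝ)..(t:ℝ), (ρn n s σ - ρ s σ)|)
        Filter.atTop (nhds 0))
    (xn : ℕ → ℝ → EuclideanSpace ℝ (Fin d)) (x : ℝ → EuclideanSpace ℝ (Fin d))
    (hxncont : ∀ n, ContinuousOn (xn n) (Set.Icc 0 T))
    (hxcont : ContinuousOn x (Set.Icc 0 T))
    (hxn : ∀ n, ∀ t ∈ Set.Icc (0:ℝ) T,
      xn n t = x₀ + ∑ σ : Γ, ∫ s in (0:ℝ)..t, ρn n s σ • F σ (xn n s) s)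
    (hx : ∀ t ∈ Set.Icc (0:ℝ) T,
      x t = x₀ + ∑ σ : Γ, ∫ s in (0:ℝ)..t, ρ s σ • F σ (x s) s) :
    TendstoUniformlyOn (fun n => xn n) x Filter.atTop (Set.Icc 0 T) := by
  classical
  have hT0 : (0:ℝ) ≤ T := hT.le
  set N : ℝ := (Fintype.card Γ : ℝ) with hN
  have hN0 : 0 ≤ N := by positivity
  -- bounds on the weights
  have hρb : ∀ s ∈ Icc (0:ℝ) T, ∀ σ, |ρ s σ| ≤ 1 := fun s hs σ =>
    abs_le.2 ⟨by linarith [(hρmem s hs σ).1], (hρmem s hs σ).2⟩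
  have hρnb : ∀ n, ∀ s ∈ Icc (0:ℝ) T, ∀ σ, |ρn n s σ| ≤ 1 := fun n s hs σ =>
    abs_le.2 ⟨by linarith [(hρnmem n s hs σ).1], (hρnmem n s hs σ).2⟩
  have hρnρb : ∀ n, ∀ s ∈ Icc (0:ℝ) T, ∀ σ, |ρn n s σ - ρ s σ| ≤ 1 := by
    intro n s hs σ
    have h1 := hρnmem n s hs σ
    have h2 := hρmem s hs σ
    rw [abs_le]
    constructor <;> [linarith [h1.1, h2.2]; linarith [h1.2, h2.1]]
  -- continuity of composed integrands
  have cofy : ∀ (y : ℝ → EuclideanSpace ℝ (Fin d)), ContinuousOn y (Icc 0 T) → ∀ σ : Γ,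
      ContinuousOn (fun s => F σ (y s) s) (Icc 0 T) := by
    intro y hy σ
    have hpair : ContinuousOn (fun s : ℝ => (y s, s)) (Icc 0 T) := hy.prodMk continuousOn_id
    exact (hFcont σ).comp hpair fun s hs => ⟨mem_univ _, hs⟩
  have cFx : ∀ σ : Γ, ContinuousOn (fun s => F σ (x s) s) (Icc 0 T) := cofy x hxcont
  have cFxn : ∀ n, ∀ σ : Γ, ContinuousOn (fun s => F σ (xn n s) s) (Icc 0 T) :=
    fun n => cofy (xn n) (hxncont n)
  -- the a priori bound
  set R : ℝ := (‖x₀‖ + N * κ₁ * T) * Real.exp (N * κ₂ * T) with hR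
  have apriori : ∀ (w : ℝ → Γ → ℝ) (y : ℝ → EuclideanSpace ℝ (Fin d)),
      (∀ σ, Measurable fun t => w t σ) →
      (∀ s ∈ Icc (0:ℝ) T, ∀ σ, |w s σ| ≤ 1) →
      ContinuousOn y (Icc 0 T) →
      (∀ t ∈ Icc (0:ℝ) T, y t = x₀ + ∑ σ : Γ, ∫ s in (0:ℝ)..t, w s σ • F σ (y s) s) →
      ∀ t ∈ Icc (0:ℝ) T, ‖y t‖ ≤ R := by
    intro w y hwm hwb hyc hyeq
    have hynorm : ContinuousOn (fun s => ‖y s‖) (Icc 0 T) := hyc.norm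
    have hbnd : ∀ t ∈ Icc (0:ℝ) T,
        ‖y t‖ ≤ (‖x₀‖ + N * κ₁ * T) + (N * κ₂) * ∫ s in (0:ℝ)..t, ‖y s‖ := by
      intro t ht
      have hInt1 : IntervalIntegrable (fun s => κ₁ + κ₂ * ‖y s‖) volume 0 t :=
        myII ((continuousOn_const.add (continuousOn_const.mul hynorm)).integrableOn_Icc)
          le_rfl ht.1 ht.2
      have hIntn : IntervalIntegrable (fun s => ‖y s‖) volume 0 t :=
        myII (hynorm.integrableOn_Icc) le_rfl ht.1 ht.2
      have key : ∀ σ : Γ, ‖∫ s in (0:ℝ)..t, w s σ • F σ (y s) s‖ ≤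
          ∫ s in (0:ℝ)..t, (κ₁ + κ₂ * ‖y s‖) := by
        intro σ
        have hb : ∀ᵐ s ∂(volume.restrict (Set.uIoc (0:ℝ) t)),
            ‖w s σ • F σ (y s) s‖ ≤ κ₁ + κ₂ * ‖y s‖ := by
          filter_upwards [ae_restrict_mem measurableSet_uIoc] with s hs
          rw [uIoc_of_le ht.1] at hs
          have hsmem : s ∈ Icc (0:ℝ) T := ⟨hs.1.le, hs.2.trans ht.2⟩
          calc ‖w s σ • F σ (y s) s‖ = |w s σ| * ‖F σ (y s) s‖ := by
                rw [norm_smul, Real.norm_eq_abs]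
            _ ≤ 1 * (κ₁ + κ₂ * ‖y s‖) := by
                refine mul_le_mul (hwb s hsmem σ) (hFgrow σ (y s) s hsmem) (norm_nonneg _)
                  zero_le_one
            _ = κ₁ + κ₂ * ‖y s‖ := one_mul _
        refine le_trans (intervalIntegral.norm_integral_le_abs_of_norm_le hb hInt1) ?_
        rw [abs_of_nonneg]
        apply intervalIntegral.integral_nonneg ht.1
        intro s hs
        positivity
      have hval : (∫ s in (0:ℝ)..t, (κ₁ + κ₂ * ‖y s‖)) =
          κ₁ * t + κ₂ * ∫ s in (0:ℝ)..t, ‖y s‖ := by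
        rw [intervalIntegral.integral_add intervalIntegrable_const (hIntn.const_mul κ₂),
          intervalIntegral.integral_const, intervalIntegral.integral_const_mul]
        simp [mul_comm]
      have hzero : (0:ℝ) ≤ ∫ s in (0:ℝ)..t, ‖y s‖ :=
        intervalIntegral.integral_nonneg ht.1 fun s _ => norm_nonneg _
      calc ‖y t‖ = ‖x₀ + ∑ σ : Γ, ∫ s in (0:ℝ)..t, w s σ • F σ (y s) s‖ := by rw [hyeq t ht]
        _ ≤ ‖x₀‖ + ∑ σ : Γ, ‖∫ s in (0:ℝ)..t, w s σ • F σ (y s) s‖ :=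
            le_trans (norm_add_le _ _) (by gcongr; exact norm_sum_le _ _)
        _ ≤ ‖x₀‖ + ∑ _σ : Γ, ∫ s in (0:ℝ)..t, (κ₁ + κ₂ * ‖y s‖) := by
            gcongr with σ; exact key σ
        _ = ‖x₀‖ + N * (κ₁ * t + κ₂ * ∫ s in (0:ℝ)..t, ‖y s‖) := by
            rw [Finset.sum_const, Finset.card_univ, nsmul_eq_mul, hval, hN]
        _ ≤ (‖x₀‖ + N * κ₁ * T) + (N * κ₂) * ∫ s in (0:ℝ)..t, ‖y s‖ := by
            have : N * (κ₁ * t) ≤ N * (κ₁ * T) := by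
              have := mul_le_mul_of_nonneg_left ht.2 hκ₁.le
              exact mul_le_mul_of_nonneg_left this hN0
            nlinarith
    have := myGron hynorm (fun t _ => norm_nonneg _)
      (by positivity) (by positivity) hbnd
    exact this
  have hxR : ∀ t ∈ Icc (0:ℝ) T, ‖x t‖ ≤ R := apriori ρ x hρmeas hρb hxcont hx
  have hxnR : ∀ n, ∀ t ∈ Icc (0:ℝ) T, ‖xn n t‖ ≤ R :=
    fun n => apriori (ρn n) (xn n) (hρnmeas n) (hρnb n) (hxncont n) (hxn n)
  -- Lipschitz constant on a ball containing all trajectories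
  set K : Set (EuclideanSpace ℝ (Fin d)) := Metric.closedBall 0 R with hK
  have hKc : IsCompact K := isCompact_closedBall _ _
  choose L₀ hL₀ using fun σ => hFlip σ K hKc
  set L : ℝ := ∑ σ : Γ, max (L₀ σ) 0 with hL
  have hL0 : 0 ≤ L := Finset.sum_nonneg fun σ _ => le_max_right _ _
  have hLip : ∀ σ : Γ, ∀ a ∈ K, ∀ b ∈ K, ∀ t ∈ Icc (0:ℝ) T,
      ‖F σ a t - F σ b t‖ ≤ L * ‖a - b‖ := by
    intro σ a ha b hb t ht
    refine le_trans (hL₀ σ a ha b hb t ht) (mul_le_mul_of_nonneg_right ?_ (norm_nonneg _))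
    exact le_trans (le_max_left (L₀ σ) 0)
      (Finset.single_le_sum (fun σ _ => le_max_right (L₀ σ) 0) (Finset.mem_univ σ))
  have hxK : ∀ t ∈ Icc (0:ℝ) T, x t ∈ K := by
    intro t ht
    rw [hK, Metric.mem_closedBall, dist_eq_norm, sub_zero]
    exact hxR t ht
  have hxnK : ∀ n, ∀ t ∈ Icc (0:ℝ) T, xn n t ∈ K := by
    intro n t ht
    rw [hK, Metric.mem_closedBall, dist_eq_norm, sub_zero]
    exact hxnR n t ht
  -- decomposition of the difference
  have hdecomp : ∀ n, ∀ t ∈ Icc (0:ℝ) T, xn n t - x t =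
      (∑ σ : Γ, ∫ s in (0:ℝ)..t, ρn n s σ • (F σ (xn n s) s - F σ (x s) s)) +
        ∑ σ : Γ, ∫ s in (0:ℝ)..t, (ρn n s σ - ρ s σ) • F σ (x s) s := by
    intro n t ht
    rw [hxn n t ht, hx t ht, add_sub_add_left_eq_sub, ← Finset.sum_sub_distrib,
      ← Finset.sum_add_distrib]
    refine Finset.sum_congr rfl fun σ _ => ?_
    have hI1 : IntervalIntegrable (fun s => ρn n s σ • F σ (xn n s) s) volume 0 t :=
      myII (myIntOn (cFxn n σ) (hρnmeas n σ) fun s hs => hρnb n s hs σ) le_rfl ht.1 ht.2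
    have hI2 : IntervalIntegrable (fun s => ρ s σ • F σ (x s) s) volume 0 t :=
      myII (myIntOn (cFx σ) (hρmeas σ) fun s hs => hρb s hs σ) le_rfl ht.1 ht.2
    have hI3 : IntervalIntegrable
        (fun s => ρn n s σ • (F σ (xn n s) s - F σ (x s) s)) volume 0 t :=
      myII (myIntOn ((cFxn n σ).sub (cFx σ)) (hρnmeas n σ) fun s hs => hρnb n s hs σ)
        le_rfl ht.1 ht.2
    have hI4 : IntervalIntegrable
        (fun s => (ρn n s σ - ρ s σ) • F σ (x s) s) volume 0 t :=
      myII (myIntOn (cFx σ) ((hρnmeas n σ).sub (hρmeas σ)) fun s hs => hρnρb n s hs σ)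
        le_rfl ht.1 ht.2
    rw [← intervalIntegral.integral_sub hI1 hI2, ← intervalIntegral.integral_add hI3 hI4]
    congr 1
    funext s
    module
  -- main convergence argument
  rw [Metric.tendstoUniformlyOn_iff]
  intro ε hε
  set C : ℝ := Real.exp (N * L * T) with hCdef
  have hC1 : 1 ≤ C := Real.one_le_exp (by positivity)
  have hCpos : 0 < C := lt_of_lt_of_le one_pos hC1
  set η : ℝ := ε / (2 * C) with hη
  have hηpos : 0 < η := div_pos hε (by positivity)
  -- uniform smallness of the perturbation term
  have hDsmall : ∀ᶠ n in atTop, ∀ t ∈ Icc (0:ℝ) T,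
      ‖∑ σ : Γ, ∫ s in (0:ℝ)..t, (ρn n s σ - ρ s σ) • F σ (x s) s‖ ≤ η := by
    set η' : ℝ := η / (N + 1) with hη'
    have hη'pos : 0 < η' := div_pos hηpos (by positivity)
    have per : ∀ σ : Γ, ∀ᶠ n in atTop, ∀ t ∈ Icc (0:ℝ) T,
        ‖∫ s in (0:ℝ)..t, (ρn n s σ - ρ s σ) • F σ (x s) s‖ ≤ η' := by
      intro σ
      exact myKey hT (cFx σ) (fun n => (hρnmeas n σ).sub (hρmeas σ))
        (fun n s hs => hρnρb n s hs σ) (hconv σ) hη'pos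
    filter_upwards [Filter.eventually_all.2 per] with n hn t ht
    calc ‖∑ σ : Γ, ∫ s in (0:ℝ)..t, (ρn n s σ - ρ s σ) • F σ (x s) s‖ ≤
        ∑ σ : Γ, ‖∫ s in (0:ℝ)..t, (ρn n s σ - ρ s σ) • F σ (x s) s‖ := norm_sum_le _ _
      _ ≤ ∑ _σ : Γ, η' := Finset.sum_le_sum fun σ _ => hn σ t ht
      _ = N * η' := by rw [Finset.sum_const, Finset.card_univ, nsmul_eq_mul, hN]
      _ ≤ η := by
          rw [hη']
          calc N * (η / (N + 1)) = (N / (N + 1)) * η := by ring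
            _ ≤ 1 * η := by
                refine mul_le_mul_of_nonneg_right ?_ hηpos.le
                rw [div_le_one (by linarith)]
                linarith
            _ = η := one_mul η
  filter_upwards [hDsmall] with n hn t ht
  -- Grönwall for the error
  have hecont : ContinuousOn (fun t => ‖xn n t - x t‖) (Icc 0 T) :=
    ((hxncont n).sub hxcont).norm
  have hbnd : ∀ t ∈ Icc (0:ℝ) T,
      ‖xn n t - x t‖ ≤ η + (N * L) * ∫ s in (0:ℝ)..t, ‖xn n s - x s‖ := by
    intro t ht
    have hIntn : IntervalIntegrable (fun s => ‖xn n s - x s‖) volume 0 t :=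
      myII (hecont.integrableOn_Icc) le_rfl ht.1 ht.2
    have hIntLn : IntervalIntegrable (fun s => L * ‖xn n s - x s‖) volume 0 t :=
      hIntn.const_mul L
    have key : ∀ σ : Γ, ‖∫ s in (0:ℝ)..t, ρn n s σ • (F σ (xn n s) s - F σ (x s) s)‖ ≤
        ∫ s in (0:ℝ)..t, L * ‖xn n s - x s‖ := by
      intro σ
      have hb : ∀ᵐ s ∂(volume.restrict (Set.uIoc (0:ℝ) t)),
          ‖ρn n s σ • (F σ (xn n s) s - F σ (x s) s)‖ ≤ L * ‖xn n s - x s‖ := by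
        filter_upwards [ae_restrict_mem measurableSet_uIoc] with s hs
        rw [uIoc_of_le ht.1] at hs
        have hsmem : s ∈ Icc (0:ℝ) T := ⟨hs.1.le, hs.2.trans ht.2⟩
        calc ‖ρn n s σ • (F σ (xn n s) s - F σ (x s) s)‖
            = |ρn n s σ| * ‖F σ (xn n s) s - F σ (x s) s‖ := by
              rw [norm_smul, Real.norm_eq_abs]
          _ ≤ 1 * (L * ‖xn n s - x s‖) := by
              refine mul_le_mul (hρnb n s hsmem σ)
                (hLip σ (xn n s) (hxnK n s hsmem) (x s) (hxK s hsmem) s hsmem)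
                (norm_nonneg _) zero_le_one
          _ = L * ‖xn n s - x s‖ := one_mul _
      refine le_trans (intervalIntegral.norm_integral_le_abs_of_norm_le hb hIntLn) ?_
      rw [abs_of_nonneg]
      apply intervalIntegral.integral_nonneg ht.1
      intro s hs
      positivity
    calc ‖xn n t - x t‖ = ‖(∑ σ : Γ, ∫ s in (0:ℝ)..t, ρn n s σ •
          (F σ (xn n s) s - F σ (x s) s)) +
            ∑ σ : Γ, ∫ s in (0:ℝ)..t, (ρn n s σ - ρ s σ) • F σ (x s) s‖ := by
          rw [hdecomp n t ht]
      _ ≤ (∑ σ : Γ, ‖∫ s in (0:ℝ)..t, ρn n s σ • (F σ (xn n s) s - F σ (x s) s)‖) +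
            ‖∑ σ : Γ, ∫ s in (0:ℝ)..t, (ρn n s σ - ρ s σ) • F σ (x s) s‖ :=
          le_trans (norm_add_le _ _) (by gcongr; exact norm_sum_le _ _)
      _ ≤ (∑ _σ : Γ, ∫ s in (0:ℝ)..t, L * ‖xn n s - x s‖) + η := by
          gcongr with σ
          · exact key σ
          · exact hn t ht
      _ = η + (N * L) * ∫ s in (0:ℝ)..t, ‖xn n s - x s‖ := by
          rw [Finset.sum_const, Finset.card_univ, nsmul_eq_mul,
            intervalIntegral.integral_const_mul]
          push_cast [hN]
          ring
  have hgron := myGron hecont (fun t _ => norm_nonneg _) hηpos.le (by positivity) hbnd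
  have := hgron t ht
  rw [dist_eq_norm, norm_sub_rev]
  calc ‖xn n t - x t‖ ≤ η * Real.exp (N * L * T) := this
    _ = ε / 2 := by rw [hη, hCdef]; field_simp
    _ < ε := by linarith
end

section
/- Let f_n (n ≥ 1) and f be measurable functions from [0,T] to [0,1]. Then the following are equivalent: (i) ∫₀^T g(t) f_n(t) dt → ∫₀^T g(t) f(t) dt for every continuous g : [0,T] → ℝ (weak convergence of the measures f_n dt to f dt); (ii) ∫₀^t f_n(s) ds → ∫₀^t f(s) ds for every t ∈ [0,T]; (iii) sup_{t∈[0,T]} | ∫₀^t (f_n(s) − f(s)) ds | → 0 as n → ∞. -/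
open Set MeasureTheory


lemma aux_int {T : ℝ} (hT : 0 ≤ T) (φ : ℝ → ℝ) (hm : Measurable φ) {C : ℝ}
    (hb : ∀ t ∈ Icc (0:ℝ) T, |φ t| ≤ C) {a b : ℝ}
    (ha : a ∈ Icc (0:ℝ) T) (hb' : b ∈ Icc (0:ℝ) T) :
    IntervalIntegrable φ volume a b := by
  rw [intervalIntegrable_iff]
  have hsub : Set.uIoc a b ⊆ Icc (0:ℝ) T := by
    refine subset_trans Set.uIoc_subset_uIcc ?_
    rw [← Set.uIcc_of_le hT]
    exact Set.uIcc_subset_uIcc ((Set.uIcc_of_le hT) ▸ ha) ((Set.uIcc_of_le hT) ▸ hb')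
  refine MeasureTheory.Integrable.mono' (g := fun _ => C) ?_ hm.aestronglyMeasurable ?_
  · exact integrableOn_const measure_Ioc_lt_top.ne
  · exact (ae_restrict_iff' measurableSet_uIoc).2 (Filter.Eventually.of_forall fun x hx => hb x (hsub hx))

lemma aux_bound {T : ℝ} (hT : 0 ≤ T) (φ : ℝ → ℝ) {C : ℝ}
    (hb : ∀ t ∈ Icc (0:ℝ) T, |φ t| ≤ C) {a b : ℝ}
    (ha : a ∈ Icc (0:ℝ) T) (hb' : b ∈ Icc (0:ℝ) T) :
    |∫ s in a..b, φ s| ≤ C * |b - a| := by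
  have := intervalIntegral.norm_integral_le_of_norm_le_const (C := C) (a := a) (b := b) (f := φ) ?_
  · simpa using this
  · intro x hx
    have hsub : Set.uIoc a b ⊆ Icc (0:ℝ) T := by
      refine subset_trans Set.uIoc_subset_uIcc ?_
      rw [← Set.uIcc_of_le hT]
      exact Set.uIcc_subset_uIcc ((Set.uIcc_of_le hT) ▸ ha) ((Set.uIcc_of_le hT) ▸ hb')
    simpa using hb x (hsub hx)

lemma part_pt {T : ℝ} (hT : 0 < T) {N : ℕ} (hN : 0 < N) {t : ℝ} (ht : t ∈ Icc (0:ℝ) T) :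
    ∃ i : ℕ, i < N ∧ (i : ℝ) * (T / N) ≤ t ∧ t ≤ ((i : ℝ) + 1) * (T / N) := by
  set c := T / N with hc
  have hcpos : 0 < c := div_pos hT (by exact_mod_cast hN)
  have hNc : (N : ℝ) * c = T := by
    rw [hc]; field_simp
  set j := ⌊t / c⌋₊ with hj
  have h1 : (j : ℝ) ≤ t / c := Nat.floor_le (div_nonneg ht.1 hcpos.le)
  have h2 : t / c < (j : ℝ) + 1 := Nat.lt_floor_add_one _
  by_cases hjN : j < N
  · refine ⟨j, hjN, ?_, ?_⟩
    · calc (j : ℝ) * c ≤ (t / c) * c := by nlinarith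
      _ = t := by field_simp
    · have : t = (t / c) * c := by field_simp
      nlinarith
  · push_neg at hjN
    have htT : t = T := by
      have : (N : ℝ) ≤ (j : ℝ) := by exact_mod_cast hjN
      have h3 : (N : ℝ) * c ≤ t := by
        have := mul_le_mul_of_nonneg_right (le_trans this h1) hcpos.le
        calc (N:ℝ) * c ≤ (t/c) * c := by nlinarith
        _ = t := by field_simp
      linarith [ht.2, hNc ▸ h3]
    refine ⟨N - 1, Nat.sub_lt hN one_pos, ?_, ?_⟩
    · have hcast : ((N - 1 : ℕ) : ℝ) = (N : ℝ) - 1 := by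
        rw [Nat.cast_sub hN]; simp
      rw [hcast, htT]
      nlinarith
    · have hcast : ((N - 1 : ℕ) : ℝ) = (N : ℝ) - 1 := by
        rw [Nat.cast_sub hN]; simp
      rw [hcast, htT]
      nlinarith

lemma cutoff_mem {t δ : ℝ} (hδ : 0 < δ) (s : ℝ) :
    max 0 (min 1 ((t + δ - s)/δ)) ∈ Icc (0:ℝ) 1 :=
  ⟨le_max_left _ _, max_le zero_le_one (min_le_left _ _)⟩

lemma cutoff_int {T t δ : ℝ} (hT : 0 < T) (ht : t ∈ Icc (0:ℝ) T) (hδ : 0 < δ)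
    (φ : ℝ → ℝ) (hm : Measurable φ) (hmem : ∀ s ∈ Icc (0:ℝ) T, φ s ∈ Icc (0:ℝ) 1) :
    |(∫ s in Icc (0:ℝ) T, max 0 (min 1 ((t + δ - s)/δ)) * φ s) - ∫ s in (0:ℝ)..t, φ s| ≤ δ := by
  have hT' : (0:ℝ) ≤ T := hT.le
  have h0T : (0:ℝ) ∈ Icc (0:ℝ) T := ⟨le_refl _, hT'⟩
  have htT : t ∈ Icc (0:ℝ) T := ht
  set g : ℝ → ℝ := fun s => max 0 (min 1 ((t + δ - s)/δ)) with hg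
  have hgmeas : Measurable g := by
    apply Measurable.max measurable_const
    apply Measurable.min measurable_const
    exact (measurable_const.sub measurable_id).div_const δ
  have hgφb : ∀ s ∈ Icc (0:ℝ) T, |g s * φ s| ≤ 1 := by
    intro s hs
    have h1 := cutoff_mem (t := t) hδ s
    have h2 := hmem s hs
    rw [abs_mul, abs_of_nonneg h1.1, abs_of_nonneg h2.1]
    exact mul_le_one₀ h1.2 h2.1 h2.2
  have hgφmeas : Measurable (fun s => g s * φ s) := hgmeas.mul hm
  -- rewrite the set integral as interval integral
  have e1 : (∫ s in Icc (0:ℝ) T, g s * φ s) = ∫ s in (0:ℝ)..T, g s * φ s := by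
    rw [MeasureTheory.integral_Icc_eq_integral_Ioc, intervalIntegral.integral_of_le hT']
  have e2 : (∫ s in (0:ℝ)..T, g s * φ s)
      = (∫ s in (0:ℝ)..t, g s * φ s) + ∫ s in t..T, g s * φ s :=
    (intervalIntegral.integral_add_adjacent_intervals
      (aux_int hT' _ hgφmeas hgφb h0T htT)
      (aux_int hT' _ hgφmeas hgφb htT ⟨hT', le_refl _⟩)).symm
  have e3 : (∫ s in (0:ℝ)..t, g s * φ s) = ∫ s in (0:ℝ)..t, φ s := by
    apply intervalIntegral.integral_congr
    intro s hs
    rw [Set.uIcc_of_le ht.1] at hs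
    have hgs : g s = 1 := by
      have h1 : (1:ℝ) ≤ (t + δ - s)/δ := by
        rw [le_div_iff₀ hδ]; linarith [hs.2]
      show (0:ℝ) ⊔ (1 ⊓ ((t + δ - s) / δ)) = 1
      rw [min_eq_left h1, max_eq_right zero_le_one]
    show g s * φ s = φ s
    rw [hgs, one_mul]
  have hrest : |∫ s in t..T, g s * φ s| ≤ δ := by
    rcases le_total T (t + δ) with hcase | hcase
    · calc |∫ s in t..T, g s * φ s| ≤ 1 * |T - t| := aux_bound hT' _ hgφb htT ⟨hT', le_refl _⟩
        _ ≤ δ := by rw [one_mul, abs_of_nonneg (by linarith [ht.2])]; linarith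
    · have htd : t + δ ∈ Icc (0:ℝ) T := ⟨by linarith [ht.1], hcase⟩
      have e4 : (∫ s in t..T, g s * φ s)
          = (∫ s in t..(t+δ), g s * φ s) + ∫ s in (t+δ)..T, g s * φ s :=
        (intervalIntegral.integral_add_adjacent_intervals
          (aux_int hT' _ hgφmeas hgφb htT htd)
          (aux_int hT' _ hgφmeas hgφb htd ⟨hT', le_refl _⟩)).symm
      have e5 : (∫ s in (t+δ)..T, g s * φ s) = 0 := by
        have : (∫ s in (t+δ)..T, g s * φ s) = ∫ s in (t+δ)..T, (0:ℝ) := by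
          apply intervalIntegral.integral_congr
          intro s hs
          rw [Set.uIcc_of_le hcase] at hs
          have hgs : g s = 0 := by
            have h1 : (t + δ - s)/δ ≤ 0 :=
              div_nonpos_of_nonpos_of_nonneg (by linarith [hs.1]) hδ.le
            show (0:ℝ) ⊔ (1 ⊓ ((t + δ - s) / δ)) = 0
            exact max_eq_left (le_trans (min_le_right _ _) h1)
          show g s * φ s = 0
          rw [hgs, zero_mul]
        rw [this, intervalIntegral.integral_zero]
      have e6 : |∫ s in t..(t+δ), g s * φ s| ≤ δ := by
        calc |∫ s in t..(t+δ), g s * φ s| ≤ 1 * |(t+δ) - t| := aux_bound hT' _ hgφb htT htd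
          _ = δ := by rw [one_mul]; simp [abs_of_nonneg hδ.le]
      rw [e4, e5, add_zero]
      exact e6
  rw [e1, e2, e3]
  simpa using hrest

lemma key_ii_iii (T : ℝ) (hT : 0 < T)
    (fn : ℕ → ℝ → ℝ) (f : ℝ → ℝ)
    (hfnmeas : ∀ n, Measurable (fn n)) (hfmeas : Measurable f)
    (hfnmem : ∀ n, ∀ t ∈ Set.Icc (0:ℝ) T, fn n t ∈ Set.Icc (0:ℝ) 1)
    (hfmem : ∀ t ∈ Set.Icc (0:ℝ) T, f t ∈ Set.Icc (0:ℝ) 1)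
    (hii : ∀ t ∈ Set.Icc (0:ℝ) T,
        Filter.Tendsto (fun n => ∫ s in (0:ℝ)..t, fn n s)
          Filter.atTop (nhds (∫ s in (0:ℝ)..t, f s))) :
    Filter.Tendsto
        (fun n => ⨆ t : Set.Icc (0:ℝ) T, |∫ s in (0:ℝ)..(t:ℝ), (fn n s - f s)|)
        Filter.atTop (nhds 0) := by
  have hT' : (0:ℝ) ≤ T := hT.le
  have : Nonempty (Icc (0:ℝ) T) := ⟨⟨0, le_refl _, hT'⟩⟩
  have h0T : (0:ℝ) ∈ Icc (0:ℝ) T := ⟨le_refl _, hT'⟩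
  have hfnb : ∀ n, ∀ t ∈ Icc (0:ℝ) T, |fn n t| ≤ 1 := fun n t ht =>
    abs_le.2 ⟨by linarith [(hfnmem n t ht).1], (hfnmem n t ht).2⟩
  have hfb : ∀ t ∈ Icc (0:ℝ) T, |f t| ≤ 1 := fun t ht =>
    abs_le.2 ⟨by linarith [(hfmem t ht).1], (hfmem t ht).2⟩
  have hdb : ∀ n, ∀ t ∈ Icc (0:ℝ) T, |fn n t - f t| ≤ 1 := by
    intro n t ht
    have h1 := hfnmem n t ht; have h2 := hfmem t ht
    rw [abs_le]; constructor <;> [linarith [h1.1, h2.2]; linarith [h1.2, h2.1]]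
  have hdmeas : ∀ n, Measurable (fun s => fn n s - f s) := fun n => (hfnmeas n).sub hfmeas
  -- equality of difference integral
  have hEq : ∀ n, ∀ t ∈ Icc (0:ℝ) T, (∫ s in (0:ℝ)..t, (fn n s - f s)) =
      (∫ s in (0:ℝ)..t, fn n s) - (∫ s in (0:ℝ)..t, f s) := fun n t ht =>
    intervalIntegral.integral_sub (aux_int hT' _ (hfnmeas n) (hfnb n) h0T ht)
      (aux_int hT' _ hfmeas hfb h0T ht)
  have hBdd : ∀ n, BddAbove (range fun t : Icc (0:ℝ) T => |∫ s in (0:ℝ)..(t:ℝ), (fn n s - f s)|) := by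
    intro n
    refine ⟨T, ?_⟩
    rintro x ⟨t, rfl⟩
    calc |∫ s in (0:ℝ)..(t:ℝ), (fn n s - f s)| ≤ 1 * |(t:ℝ) - 0| :=
          aux_bound hT' _ (hdb n) h0T t.2
      _ ≤ T := by rw [one_mul]; rw [sub_zero, abs_of_nonneg t.2.1]; exact t.2.2
  rw [Metric.tendsto_atTop]
  intro ε hε
  set N : ℕ := ⌊8 * T / ε⌋₊ + 1 with hNdef
  have hN : 0 < N := Nat.succ_pos _
  set c : ℝ := T / N with hcdef
  have hcpos : 0 < c := div_pos hT (by exact_mod_cast hN)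
  have hNc : (N : ℝ) * c = T := by rw [hcdef]; field_simp
  have hcε : c < ε / 8 := by
    have h1 : 8 * T / ε < (N : ℝ) := by
      rw [hNdef]; push_cast; exact Nat.lt_floor_add_one _
    rw [hcdef, div_lt_div_iff₀ (by exact_mod_cast hN) (by norm_num : (0:ℝ) < 8)]
    rw [div_lt_iff₀ hε] at h1
    linarith
  have hmemi : ∀ i : ℕ, i ≤ N → (i : ℝ) * c ∈ Icc (0:ℝ) T := by
    intro i hi
    constructor
    · positivity
    · rw [← hNc]
      have : (i:ℝ) ≤ N := by exact_mod_cast hi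
      nlinarith
  have hev : ∀ᶠ n in Filter.atTop, ∀ i ∈ Finset.range (N+1),
      |(∫ s in (0:ℝ)..((i:ℝ)*c), fn n s) - ∫ s in (0:ℝ)..((i:ℝ)*c), f s| < ε/4 := by
    rw [Filter.eventually_all_finset]
    intro i hi
    have hi' : i ≤ N := Nat.lt_succ_iff.1 (Finset.mem_range.1 hi)
    have := Metric.tendsto_nhds.mp (hii ((i:ℝ)*c) (hmemi i hi')) (ε/4) (by linarith)
    simpa [Real.dist_eq] using this
  obtain ⟨N0, hN0⟩ := Filter.eventually_atTop.1 hev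
  refine ⟨N0, fun n hn' => ?_⟩
  have hn := hN0 n hn'
  have hDnonneg : 0 ≤ ⨆ t : Icc (0:ℝ) T, |∫ s in (0:ℝ)..(t:ℝ), (fn n s - f s)| := by
    have := le_ciSup (hBdd n) (⟨0, h0T⟩ : Icc (0:ℝ) T)
    simpa using le_trans (by simp) this
  rw [Real.dist_eq, sub_zero, abs_of_nonneg hDnonneg]
  have hsup : (⨆ t : Icc (0:ℝ) T, |∫ s in (0:ℝ)..(t:ℝ), (fn n s - f s)|) ≤ ε/2 := by
    refine ciSup_le ?_
    intro t
    obtain ⟨i, hiN, hl, hr⟩ := part_pt hT hN t.2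
    have hic : (i:ℝ) * c ∈ Icc (0:ℝ) T := hmemi i hiN.le
    have ht : (t:ℝ) ∈ Icc (0:ℝ) T := t.2
    have hkey : |(∫ s in (0:ℝ)..(t:ℝ), fn n s) - ∫ s in (0:ℝ)..(t:ℝ), f s| ≤ ε/2 := by
      have hi1 := hn i (Finset.mem_range.2 (by omega))
      -- |F n t - F n (ic)| ≤ c
      have hFn : |(∫ s in (0:ℝ)..(t:ℝ), fn n s) - ∫ s in (0:ℝ)..((i:ℝ)*c), fn n s| ≤ c := by
        have heq : (∫ s in (0:ℝ)..(t:ℝ), fn n s) - (∫ s in (0:ℝ)..((i:ℝ)*c), fn n s)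
            = ∫ s in ((i:ℝ)*c)..(t:ℝ), fn n s :=
          intervalIntegral.integral_interval_sub_left
            (aux_int hT' _ (hfnmeas n) (hfnb n) h0T ht)
            (aux_int hT' _ (hfnmeas n) (hfnb n) h0T hic)
        rw [heq]
        calc |∫ s in ((i:ℝ)*c)..(t:ℝ), fn n s| ≤ 1 * |(t:ℝ) - (i:ℝ)*c| :=
              aux_bound hT' _ (hfnb n) hic ht
          _ ≤ c := by rw [one_mul, abs_of_nonneg (by linarith)]; nlinarith
      have hF : |(∫ s in (0:ℝ)..(t:ℝ), f s) - ∫ s in (0:ℝ)..((i:ℝ)*c), f s| ≤ c := by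
        have heq : (∫ s in (0:ℝ)..(t:ℝ), f s) - (∫ s in (0:ℝ)..((i:ℝ)*c), f s)
            = ∫ s in ((i:ℝ)*c)..(t:ℝ), f s :=
          intervalIntegral.integral_interval_sub_left
            (aux_int hT' _ hfmeas hfb h0T ht)
            (aux_int hT' _ hfmeas hfb h0T hic)
        rw [heq]
        calc |∫ s in ((i:ℝ)*c)..(t:ℝ), f s| ≤ 1 * |(t:ℝ) - (i:ℝ)*c| :=
              aux_bound hT' _ hfb hic ht
          _ ≤ c := by rw [one_mul, abs_of_nonneg (by linarith)]; nlinarith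
      set A := (∫ s in (0:ℝ)..(t:ℝ), fn n s)
      set B := (∫ s in (0:ℝ)..(t:ℝ), f s)
      set A' := (∫ s in (0:ℝ)..((i:ℝ)*c), fn n s)
      set B' := (∫ s in (0:ℝ)..((i:ℝ)*c), f s)
      have : |A - B| ≤ |A - A'| + |A' - B'| + |B' - B| := by
        have := abs_sub_le A A' B
        have := abs_sub_le A' B' B
        have h3 := abs_sub_le A A' B'
        calc |A - B| ≤ |A - B'| + |B' - B| := abs_sub_le A B' B
          _ ≤ (|A - A'| + |A' - B'|) + |B' - B| := by linarith [abs_sub_le A A' B']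
      calc |A - B| ≤ |A - A'| + |A' - B'| + |B' - B| := this
        _ ≤ c + ε/4 + c := by
            have h4 : |B' - B| = |B - B'| := abs_sub_comm _ _
            rw [h4]; exact add_le_add (add_le_add hFn hi1.le) hF
        _ ≤ ε/2 := by linarith
    rw [hEq n (t:ℝ) ht]
    exact hkey
  linarith

lemma key_iii_ii (T : ℝ) (hT : 0 < T)
    (fn : ℕ → ℝ → ℝ) (f : ℝ → ℝ)
    (hfnmeas : ∀ n, Measurable (fn n)) (hfmeas : Measurable f)
    (hfnmem : ∀ n, ∀ t ∈ Set.Icc (0:ℝ) T, fn n t ∈ Set.Icc (0:ℝ) 1)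
    (hfmem : ∀ t ∈ Set.Icc (0:ℝ) T, f t ∈ Set.Icc (0:ℝ) 1)
    (hiii : Filter.Tendsto
        (fun n => ⨆ t : Set.Icc (0:ℝ) T, |∫ s in (0:ℝ)..(t:ℝ), (fn n s - f s)|)
        Filter.atTop (nhds 0)) :
    ∀ t ∈ Set.Icc (0:ℝ) T,
        Filter.Tendsto (fun n => ∫ s in (0:ℝ)..t, fn n s)
          Filter.atTop (nhds (∫ s in (0:ℝ)..t, f s)) := by
  have hT' : (0:ℝ) ≤ T := hT.le
  have h0T : (0:ℝ) ∈ Icc (0:ℝ) T := ⟨le_refl _, hT'⟩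
  have hfnb : ∀ n, ∀ t ∈ Icc (0:ℝ) T, |fn n t| ≤ 1 := fun n t ht =>
    abs_le.2 ⟨by linarith [(hfnmem n t ht).1], (hfnmem n t ht).2⟩
  have hfb : ∀ t ∈ Icc (0:ℝ) T, |f t| ≤ 1 := fun t ht =>
    abs_le.2 ⟨by linarith [(hfmem t ht).1], (hfmem t ht).2⟩
  have hdb : ∀ n, ∀ t ∈ Icc (0:ℝ) T, |fn n t - f t| ≤ 1 := by
    intro n t ht
    have h1 := hfnmem n t ht; have h2 := hfmem t ht
    rw [abs_le]; constructor <;> [linarith [h1.1, h2.2]; linarith [h1.2, h2.1]]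
  have hBdd : ∀ n, BddAbove (range fun t : Icc (0:ℝ) T => |∫ s in (0:ℝ)..(t:ℝ), (fn n s - f s)|) := by
    intro n
    refine ⟨T, ?_⟩
    rintro x ⟨t, rfl⟩
    calc |∫ s in (0:ℝ)..(t:ℝ), (fn n s - f s)| ≤ 1 * |(t:ℝ) - 0| :=
          aux_bound hT' _ (hdb n) h0T t.2
      _ ≤ T := by rw [one_mul, sub_zero, abs_of_nonneg t.2.1]; exact t.2.2
  intro t ht
  have hEq : ∀ n, (∫ s in (0:ℝ)..t, (fn n s - f s)) =
      (∫ s in (0:ℝ)..t, fn n s) - (∫ s in (0:ℝ)..t, f s) := fun n =>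
    intervalIntegral.integral_sub (aux_int hT' _ (hfnmeas n) (hfnb n) h0T ht)
      (aux_int hT' _ hfmeas hfb h0T ht)
  have hle : ∀ n, ‖(∫ s in (0:ℝ)..t, fn n s) - (∫ s in (0:ℝ)..t, f s)‖ ≤
      ⨆ t : Icc (0:ℝ) T, |∫ s in (0:ℝ)..(t:ℝ), (fn n s - f s)| := by
    intro n
    rw [Real.norm_eq_abs, ← hEq n]
    exact le_ciSup (hBdd n) (⟨t, ht⟩ : Icc (0:ℝ) T)
  have h0 : Filter.Tendsto (fun n => (∫ s in (0:ℝ)..t, fn n s) - (∫ s in (0:ℝ)..t, f s))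
      Filter.atTop (nhds 0) := squeeze_zero_norm hle hiii
  have := h0.add (tendsto_const_nhds (x := ∫ s in (0:ℝ)..t, f s))
  simpa using this

lemma key_i_ii (T : ℝ) (hT : 0 < T)
    (fn : ℕ → ℝ → ℝ) (f : ℝ → ℝ)
    (hfnmeas : ∀ n, Measurable (fn n)) (hfmeas : Measurable f)
    (hfnmem : ∀ n, ∀ t ∈ Set.Icc (0:ℝ) T, fn n t ∈ Set.Icc (0:ℝ) 1)
    (hfmem : ∀ t ∈ Set.Icc (0:ℝ) T, f t ∈ Set.Icc (0:ℝ) 1)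
    (hi : ∀ g : ℝ → ℝ, Continuous g →
        Filter.Tendsto (fun n => ∫ t in Set.Icc (0:ℝ) T, g t * fn n t)
          Filter.atTop (nhds (∫ t in Set.Icc (0:ℝ) T, g t * f t))) :
    ∀ t ∈ Set.Icc (0:ℝ) T,
        Filter.Tendsto (fun n => ∫ s in (0:ℝ)..t, fn n s)
          Filter.atTop (nhds (∫ s in (0:ℝ)..t, f s)) := by
  intro t ht
  rw [Metric.tendsto_atTop]
  intro ε hε
  set δ : ℝ := ε / 4 with hδdef
  have hδ : 0 < δ := by positivity
  set g : ℝ → ℝ := fun s => max 0 (min 1 ((t + δ - s)/δ)) with hgdef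
  have hgcont : Continuous g :=
    continuous_const.max (continuous_const.min
      ((continuous_const.sub continuous_id).div_const δ))
  have hconv := Metric.tendsto_atTop.1 (hi g hgcont) δ hδ
  obtain ⟨N0, hN0⟩ := hconv
  refine ⟨N0, fun n hn => ?_⟩
  have h1 : |(∫ s in Icc (0:ℝ) T, g s * fn n s) - ∫ s in (0:ℝ)..t, fn n s| ≤ δ :=
    cutoff_int hT ht hδ (fn n) (hfnmeas n) (hfnmem n)
  have h2 : |(∫ s in Icc (0:ℝ) T, g s * f s) - ∫ s in (0:ℝ)..t, f s| ≤ δ :=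
    cutoff_int hT ht hδ f hfmeas hfmem
  have h3 := hN0 n hn
  rw [Real.dist_eq] at h3 ⊢
  have := abs_sub_abs_le_abs_sub ((∫ s in (0:ℝ)..t, fn n s)) ((∫ s in (0:ℝ)..t, f s))
  calc |(∫ s in (0:ℝ)..t, fn n s) - ∫ s in (0:ℝ)..t, f s|
      ≤ |(∫ s in (0:ℝ)..t, fn n s) - ∫ s in Icc (0:ℝ) T, g s * fn n s|
        + |(∫ s in Icc (0:ℝ) T, g s * fn n s) - ∫ s in Icc (0:ℝ) T, g s * f s|
        + |(∫ s in Icc (0:ℝ) T, g s * f s) - ∫ s in (0:ℝ)..t, f s| := by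
        set a := (∫ s in (0:ℝ)..t, fn n s)
        set b := (∫ s in (0:ℝ)..t, f s)
        set c := (∫ s in Icc (0:ℝ) T, g s * fn n s)
        set d := (∫ s in Icc (0:ℝ) T, g s * f s)
        calc |a - b| ≤ |a - d| + |d - b| := abs_sub_le a d b
          _ ≤ (|a - c| + |c - d|) + |d - b| := by linarith [abs_sub_le a c d]
          _ = |a - c| + |c - d| + |d - b| := by ring
    _ < δ + δ + δ := by
        refine add_lt_add_of_lt_of_le (add_lt_add_of_le_of_lt ?_ h3) h2
        rw [abs_sub_comm]; exact h1
    _ < ε := by rw [hδdef]; linarith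

lemma key_ii_i (T : ℝ) (hT : 0 < T)
    (fn : ℕ → ℝ → ℝ) (f : ℝ → ℝ)
    (hfnmeas : ∀ n, Measurable (fn n)) (hfmeas : Measurable f)
    (hfnmem : ∀ n, ∀ t ∈ Set.Icc (0:ℝ) T, fn n t ∈ Set.Icc (0:ℝ) 1)
    (hfmem : ∀ t ∈ Set.Icc (0:ℝ) T, f t ∈ Set.Icc (0:ℝ) 1)
    (hii : ∀ t ∈ Set.Icc (0:ℝ) T,
        Filter.Tendsto (fun n => ∫ s in (0:ℝ)..t, fn n s)
          Filter.atTop (nhds (∫ s in (0:ℝ)..t, f s))) :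
    ∀ g : ℝ → ℝ, Continuous g →
        Filter.Tendsto (fun n => ∫ t in Set.Icc (0:ℝ) T, g t * fn n t)
          Filter.atTop (nhds (∫ t in Set.Icc (0:ℝ) T, g t * f t)) := by
  intro g hg
  have hT' : (0:ℝ) ≤ T := hT.le
  have h0T : (0:ℝ) ∈ Icc (0:ℝ) T := ⟨le_refl _, hT'⟩
  have hTT : T ∈ Icc (0:ℝ) T := ⟨hT', le_refl _⟩
  have hfnb : ∀ n, ∀ t ∈ Icc (0:ℝ) T, |fn n t| ≤ 1 := fun n t ht =>
    abs_le.2 ⟨by linarith [(hfnmem n t ht).1], (hfnmem n t ht).2⟩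
  have hfb : ∀ t ∈ Icc (0:ℝ) T, |f t| ≤ 1 := fun t ht =>
    abs_le.2 ⟨by linarith [(hfmem t ht).1], (hfmem t ht).2⟩
  have hdb : ∀ n, ∀ t ∈ Icc (0:ℝ) T, |fn n t - f t| ≤ 1 := by
    intro n t ht
    have h1 := hfnmem n t ht; have h2 := hfmem t ht
    rw [abs_le]; constructor <;> [linarith [h1.1, h2.2]; linarith [h1.2, h2.1]]
  have hdmeas : ∀ n, Measurable (fun s => fn n s - f s) := fun n => (hfnmeas n).sub hfmeas
  obtain ⟨M0, hM0⟩ := isCompact_Icc.exists_bound_of_continuousOn hg.continuousOn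
  set M : ℝ := max M0 1 with hMdef
  have hM1 : (1:ℝ) ≤ M := le_max_right _ _
  have hMpos : (0:ℝ) < M := lt_of_lt_of_le one_pos hM1
  have hMb : ∀ s ∈ Icc (0:ℝ) T, |g s| ≤ M := fun s hs =>
    le_trans (hM0 s hs) (le_max_left _ _)
  have hgfnb : ∀ n, ∀ s ∈ Icc (0:ℝ) T, |g s * fn n s| ≤ M := by
    intro n s hs
    rw [abs_mul]
    calc |g s| * |fn n s| ≤ M * 1 := mul_le_mul (hMb s hs) (hfnb n s hs) (abs_nonneg _) hMpos.le
      _ = M := mul_one M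
  have hgfb : ∀ s ∈ Icc (0:ℝ) T, |g s * f s| ≤ M := by
    intro s hs
    rw [abs_mul]
    calc |g s| * |f s| ≤ M * 1 := mul_le_mul (hMb s hs) (hfb s hs) (abs_nonneg _) hMpos.le
      _ = M := mul_one M
  have hgdb : ∀ n, ∀ s ∈ Icc (0:ℝ) T, |g s * (fn n s - f s)| ≤ M := by
    intro n s hs
    rw [abs_mul]
    calc |g s| * |fn n s - f s| ≤ M * 1 := mul_le_mul (hMb s hs) (hdb n s hs) (abs_nonneg _) hMpos.le
      _ = M := mul_one M
  rw [← tendsto_sub_nhds_zero_iff]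
  have hrepr : ∀ n, (∫ t in Icc (0:ℝ) T, g t * fn n t) - (∫ t in Icc (0:ℝ) T, g t * f t)
      = ∫ s in (0:ℝ)..T, g s * (fn n s - f s) := by
    intro n
    rw [MeasureTheory.integral_Icc_eq_integral_Ioc, MeasureTheory.integral_Icc_eq_integral_Ioc,
      ← intervalIntegral.integral_of_le hT', ← intervalIntegral.integral_of_le hT',
      ← intervalIntegral.integral_sub
        (aux_int hT' (fun s => g s * fn n s) (hg.measurable.mul (hfnmeas n)) (hgfnb n) h0T hTT)
        (aux_int hT' (fun s => g s * f s) (hg.measurable.mul hfmeas) hgfb h0T hTT)]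
    apply intervalIntegral.integral_congr
    intro s _
    ring
  simp only [hrepr]
  rw [Metric.tendsto_atTop]
  intro ε hε
  set ε₁ : ℝ := ε / (2 * (T + 1)) with hε₁def
  have hε₁ : 0 < ε₁ := by positivity
  have huc := isCompact_Icc.uniformContinuousOn_of_continuous (hg.continuousOn (s := Icc (0:ℝ) T))
  obtain ⟨δ, hδ, hδ'⟩ := Metric.uniformContinuousOn_iff.1 huc ε₁ hε₁
  set N : ℕ := ⌊T / δ⌋₊ + 1 with hNdef
  have hN : 0 < N := Nat.succ_pos _
  set c : ℝ := T / N with hcdef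
  have hcpos : 0 < c := div_pos hT (by exact_mod_cast hN)
  have hNc : (N : ℝ) * c = T := by rw [hcdef]; field_simp
  have hcδ : c < δ := by
    have h1 : T / δ < (N : ℝ) := by rw [hNdef]; push_cast; exact Nat.lt_floor_add_one _
    rw [hcdef, div_lt_iff₀ (by exact_mod_cast hN)]
    rw [div_lt_iff₀ hδ] at h1
    nlinarith
  set η : ℝ := ε / (4 * ((N:ℝ) + 1) * M) with hηdef
  have hη : 0 < η := by positivity
  have hmemi : ∀ i : ℕ, i ≤ N → (i : ℝ) * c ∈ Icc (0:ℝ) T := by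
    intro i hi
    constructor
    · positivity
    · rw [← hNc]
      have : (i:ℝ) ≤ N := by exact_mod_cast hi
      nlinarith
  have hev : ∀ᶠ n in Filter.atTop, ∀ i ∈ Finset.range (N+1),
      |(∫ s in (0:ℝ)..((i:ℝ)*c), fn n s) - ∫ s in (0:ℝ)..((i:ℝ)*c), f s| < η := by
    rw [Filter.eventually_all_finset]
    intro i hi
    have hi' : i ≤ N := Nat.lt_succ_iff.1 (Finset.mem_range.1 hi)
    have := Metric.tendsto_nhds.mp (hii ((i:ℝ)*c) (hmemi i hi')) η hη
    simpa [Real.dist_eq] using this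
  obtain ⟨N0, hN0⟩ := Filter.eventually_atTop.1 hev
  refine ⟨N0, fun n hn' => ?_⟩
  have hn := hN0 n hn'
  rw [Real.dist_eq, sub_zero]
  -- split into adjacent intervals
  have hintk : ∀ k, k < N → IntervalIntegrable (fun s => g s * (fn n s - f s)) volume
      ((k:ℝ)*c) (((k:ℝ)+1)*c) := by
    intro k hk
    refine aux_int hT' _ (hg.measurable.mul (hdmeas n)) (hgdb n) (hmemi k hk.le) ?_
    have h9 : ((k:ℝ)+1)*c = ((k+1:ℕ):ℝ)*c := by push_cast; ring
    rw [h9]; exact hmemi (k+1) hk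
  have hsum : (∫ s in (0:ℝ)..T, g s * (fn n s - f s))
      = ∑ k ∈ Finset.range N, ∫ s in ((k:ℝ)*c)..(((k:ℝ)+1)*c), g s * (fn n s - f s) := by
    have h := intervalIntegral.sum_integral_adjacent_intervals (μ := volume)
      (a := fun k : ℕ => (k:ℝ)*c) (n := N)
      (f := fun s => g s * (fn n s - f s)) (by
        intro k hk
        show IntervalIntegrable (fun s => g s * (fn n s - f s)) volume ((k:ℝ)*c) (((k+1:ℕ):ℝ)*c)
        have h9 : ((k+1:ℕ):ℝ)*c = ((k:ℝ)+1)*c := by push_cast; ring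
        rw [h9]; exact hintk k hk)
    have h2 : ∑ k ∈ Finset.range N, (∫ s in ((k:ℝ)*c)..(((k:ℝ)+1)*c), g s * (fn n s - f s))
        = ∑ k ∈ Finset.range N, ∫ s in ((k:ℝ)*c)..(((k+1:ℕ):ℝ)*c), g s * (fn n s - f s) := by
      refine Finset.sum_congr rfl fun k _ => ?_
      congr 1
      push_cast; ring
    rw [h2]
    rw [show ∑ k ∈ Finset.range N, (∫ s in ((k:ℝ)*c)..(((k+1:ℕ):ℝ)*c), g s * (fn n s - f s))
        = ∫ s in (((0:ℕ):ℝ)*c)..(((N:ℕ):ℝ)*c), g s * (fn n s - f s) from h]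
    congr 1
    · simp
    · rw [hNc]
  rw [hsum]
  -- bound each term
  have hterm : ∀ i ∈ Finset.range N,
      |∫ s in ((i:ℝ)*c)..(((i:ℝ)+1)*c), g s * (fn n s - f s)| ≤ ε₁ * c + M * (2 * η) := by
    intro i hi
    have hiN : i < N := Finset.mem_range.1 hi
    have hmi : (i:ℝ)*c ∈ Icc (0:ℝ) T := hmemi i hiN.le
    have hmi1 : ((i:ℝ)+1)*c ∈ Icc (0:ℝ) T := by
      have : ((i:ℝ)+1) = ((i+1:ℕ):ℝ) := by push_cast; ring
      rw [this]; exact hmemi (i+1) hiN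
    have hle : (i:ℝ)*c ≤ ((i:ℝ)+1)*c := by nlinarith
    -- decompose
    have hdec : (∫ s in ((i:ℝ)*c)..(((i:ℝ)+1)*c), g s * (fn n s - f s))
        = (∫ s in ((i:ℝ)*c)..(((i:ℝ)+1)*c), (g s - g ((i:ℝ)*c)) * (fn n s - f s))
          + g ((i:ℝ)*c) * ∫ s in ((i:ℝ)*c)..(((i:ℝ)+1)*c), (fn n s - f s) := by
      rw [← intervalIntegral.integral_const_mul,
        ← intervalIntegral.integral_add
          (aux_int hT' (fun s => (g s - g ((i:ℝ)*c)) * (fn n s - f s)) ((hg.measurable.sub measurable_const).mul (hdmeas n))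
            (C := 2*M) (by
              intro s hs
              rw [abs_mul]
              have h1 : |g s - g ((i:ℝ)*c)| ≤ 2*M := by
                calc |g s - g ((i:ℝ)*c)| ≤ |g s| + |g ((i:ℝ)*c)| := abs_sub _ _
                  _ ≤ M + M := add_le_add (hMb s hs) (hMb _ hmi)
                  _ = 2*M := by ring
              calc |g s - g ((i:ℝ)*c)| * |fn n s - f s| ≤ (2*M) * 1 :=
                    mul_le_mul h1 (hdb n s hs) (abs_nonneg _) (by positivity)
                _ = 2*M := by ring) hmi hmi1)
          (aux_int hT' (fun s => g ((i:ℝ)*c) * (fn n s - f s)) (measurable_const.mul (hdmeas n)) (C := M) (by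
              intro s hs
              rw [abs_mul]
              calc |g ((i:ℝ)*c)| * |fn n s - f s| ≤ M * 1 :=
                    mul_le_mul (hMb _ hmi) (hdb n s hs) (abs_nonneg _) hMpos.le
                _ = M := by ring) hmi hmi1)]
      apply intervalIntegral.integral_congr
      intro s _
      ring
    rw [hdec]
    have hb1 : |∫ s in ((i:ℝ)*c)..(((i:ℝ)+1)*c), (g s - g ((i:ℝ)*c)) * (fn n s - f s)| ≤ ε₁ * c := by
      have := intervalIntegral.norm_integral_le_of_norm_le_const (C := ε₁)
        (a := (i:ℝ)*c) (b := ((i:ℝ)+1)*c)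
        (f := fun s => (g s - g ((i:ℝ)*c)) * (fn n s - f s)) ?_
      · rw [Real.norm_eq_abs] at this
        calc _ ≤ ε₁ * |((i:ℝ)+1)*c - (i:ℝ)*c| := this
          _ = ε₁ * c := by rw [show ((i:ℝ)+1)*c - (i:ℝ)*c = c by ring, abs_of_pos hcpos]
      · intro x hx
        rw [Set.uIoc_of_le hle] at hx
        have hxm : x ∈ Icc (0:ℝ) T := ⟨le_trans hmi.1 hx.1.le, le_trans hx.2 hmi1.2⟩
        have hdist : dist x ((i:ℝ)*c) < δ := by
          rw [Real.dist_eq, abs_of_pos (by linarith [hx.1])]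
          have : x - (i:ℝ)*c ≤ c := by linarith [hx.2]
          linarith
        have := hδ' x hxm ((i:ℝ)*c) hmi hdist
        rw [Real.dist_eq] at this
        rw [Real.norm_eq_abs, abs_mul]
        calc |g x - g ((i:ℝ)*c)| * |fn n x - f x| ≤ ε₁ * 1 :=
              mul_le_mul this.le (hdb n x hxm) (abs_nonneg _) hε₁.le
          _ = ε₁ := mul_one _
    have hb2 : |g ((i:ℝ)*c) * ∫ s in ((i:ℝ)*c)..(((i:ℝ)+1)*c), (fn n s - f s)| ≤ M * (2 * η) := by
      rw [abs_mul]
      have hd : (∫ s in ((i:ℝ)*c)..(((i:ℝ)+1)*c), (fn n s - f s))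
          = (∫ s in (0:ℝ)..(((i:ℝ)+1)*c), (fn n s - f s))
            - ∫ s in (0:ℝ)..((i:ℝ)*c), (fn n s - f s) :=
        (intervalIntegral.integral_interval_sub_left
          (aux_int hT' _ (hdmeas n) (hdb n) h0T hmi1)
          (aux_int hT' _ (hdmeas n) (hdb n) h0T hmi)).symm
      have hEq : ∀ u ∈ Icc (0:ℝ) T, (∫ s in (0:ℝ)..u, (fn n s - f s)) =
          (∫ s in (0:ℝ)..u, fn n s) - (∫ s in (0:ℝ)..u, f s) := fun u hu =>
        intervalIntegral.integral_sub (aux_int hT' _ (hfnmeas n) (hfnb n) h0T hu)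
          (aux_int hT' _ hfmeas hfb h0T hu)
      have h1 := hn i (Finset.mem_range.2 (by omega))
      have h2 := hn (i+1) (Finset.mem_range.2 (by omega))
      have hcast : ((i+1:ℕ):ℝ) = (i:ℝ)+1 := by push_cast; ring
      rw [hcast] at h2
      have habs : |∫ s in ((i:ℝ)*c)..(((i:ℝ)+1)*c), (fn n s - f s)| ≤ 2*η := by
        rw [hd, hEq _ hmi1, hEq _ hmi]
        set A := (∫ s in (0:ℝ)..(((i:ℝ)+1)*c), fn n s) - ∫ s in (0:ℝ)..(((i:ℝ)+1)*c), f s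
        set B := (∫ s in (0:ℝ)..((i:ℝ)*c), fn n s) - ∫ s in (0:ℝ)..((i:ℝ)*c), f s
        calc |A - B| ≤ |A| + |B| := abs_sub _ _
          _ ≤ 2*η := by linarith [h2.le, h1.le]
      exact mul_le_mul (hMb _ hmi) habs (abs_nonneg _) hMpos.le
    exact le_trans (abs_add_le _ _) (add_le_add hb1 hb2)
  calc |∑ k ∈ Finset.range N, ∫ s in ((k:ℝ)*c)..(((k:ℝ)+1)*c), g s * (fn n s - f s)|
      ≤ ∑ k ∈ Finset.range N, |∫ s in ((k:ℝ)*c)..(((k:ℝ)+1)*c), g s * (fn n s - f s)| :=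
        Finset.abs_sum_le_sum_abs _ _
    _ ≤ ∑ _k ∈ Finset.range N, (ε₁ * c + M * (2 * η)) := Finset.sum_le_sum hterm
    _ = (N:ℝ) * (ε₁ * c + M * (2 * η)) := by
        rw [Finset.sum_const, Finset.card_range, nsmul_eq_mul]
    _ < ε := by
        have e1 : (N:ℝ) * (ε₁ * c) = ε₁ * T := by rw [← hNc]; ring
        have e2 : (N:ℝ) * (M * (2 * η)) = ε * (N:ℝ) / (2 * ((N:ℝ)+1)) := by
          rw [hηdef]; field_simp; ring
        have e3 : ε₁ * T < ε/2 := by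
          rw [hε₁def, div_mul_eq_mul_div, div_lt_div_iff₀ (by positivity) two_pos]
          nlinarith
        have e4 : ε * (N:ℝ) / (2 * ((N:ℝ)+1)) ≤ ε/2 := by
          rw [div_le_div_iff₀ (by positivity) two_pos]
          nlinarith [Nat.cast_nonneg (α := ℝ) N]
        have : (N:ℝ) * (ε₁ * c + M * (2 * η))
            = (N:ℝ) * (ε₁ * c) + (N:ℝ) * (M * (2 * η)) := by ring
        rw [this, e1, e2]
        linarith


/-- for measurable functions `f_n, f : [0,T] → [0,1]` the following are
equivalent: (i) weak convergence of the measures `f_n dt` to `f dt` (integrals against all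
continuous test functions converge); (ii) pointwise convergence of the primitives
`∫₀^t f_n → ∫₀^t f` for every `t ∈ [0,T]`; (iii) uniform convergence of the primitives,
i.e. `sup_{t∈[0,T]} |∫₀^t (f_n − f)| → 0`. -/
theorem stmt15 (T : ℝ) (hT : 0 < T)
    (fn : ℕ → ℝ → ℝ) (f : ℝ → ℝ)
    (hfnmeas : ∀ n, Measurable (fn n)) (hfmeas : Measurable f)
    (hfnmem : ∀ n, ∀ t ∈ Set.Icc (0:ℝ) T, fn n t ∈ Set.Icc (0:ℝ) 1)
    (hfmem : ∀ t ∈ Set.Icc (0:ℝ) T, f t ∈ Set.Icc (0:ℝ) 1) :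
    ((∀ g : ℝ → ℝ, Continuous g →
        Filter.Tendsto (fun n => ∫ t in Set.Icc (0:ℝ) T, g t * fn n t)
          Filter.atTop (nhds (∫ t in Set.Icc (0:ℝ) T, g t * f t))) ↔
      (∀ t ∈ Set.Icc (0:ℝ) T,
        Filter.Tendsto (fun n => ∫ s in (0:ℝ)..t, fn n s)
          Filter.atTop (nhds (∫ s in (0:ℝ)..t, f s)))) ∧
    ((∀ t ∈ Set.Icc (0:ℝ) T,
        Filter.Tendsto (fun n => ∫ s in (0:ℝ)..t, fn n s)
          Filter.atTop (nhds (∫ s in (0:ℝ)..t, f s))) ↔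
      Filter.Tendsto
        (fun n => ⨆ t : Set.Icc (0:ℝ) T, |∫ s in (0:ℝ)..(t:ℝ), (fn n s - f s)|)
        Filter.atTop (nhds 0)) := by
  refine ⟨⟨key_i_ii T hT fn f hfnmeas hfmeas hfnmem hfmem,
    key_ii_i T hT fn f hfnmeas hfmeas hfnmem hfmem⟩,
    key_ii_iii T hT fn f hfnmeas hfmeas hfnmem hfmem,
    key_iii_ii T hT fn f hfnmeas hfmeas hfnmem hfmem⟩
end

section
/- Let Γ be a finite set and ρ : [0,T] → [0,1]^Γ be measurable with Σ_{σ∈Γ} ρ_σ(t) = 1 for almost every t ∈ [0,T]. Then there exists a sequence ρ^{(n)} : [0,T] → (0,1]^Γ such that for each n and each σ ∈ Γ the function ρ^{(n)}_σ is continuously differentiable on [0,T] and strictly positive, Σ_{σ∈Γ} ρ^{(n)}_σ(t) = 1 for every t ∈ [0,T], and for each σ ∈ Γ, ρ^{(n)}_σ → ρ_σ in L¹([0,T]) as n → ∞. -/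
open Set MeasureTheory intervalIntegral

noncomputable def stAv (h : ℝ) (f : ℝ → ℝ) (t : ℝ) : ℝ := h⁻¹ * ∫ s in t..(t+h), f s

lemma stAv_congr {h : ℝ} (hh : 0 ≤ h) {f g : ℝ → ℝ} {t : ℝ}
    (hfg : ∀ s ∈ Icc t (t+h), f s = g s) : stAv h f t = stAv h g t := by
  unfold stAv
  congr 1
  apply intervalIntegral.integral_congr
  rwa [uIcc_of_le (by linarith)]

lemma stAv_const {h : ℝ} (hh : 0 < h) (c t : ℝ) : stAv h (fun _ => c) t = c := by
  simp only [stAv, intervalIntegral.integral_const, add_sub_cancel_left, smul_eq_mul]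
  field_simp

lemma stAv_le {h : ℝ} (hh : 0 < h) {f : ℝ → ℝ} {c t : ℝ}
    (hfi : IntervalIntegrable f volume t (t+h)) (hfc : ∀ s ∈ Icc t (t+h), f s ≤ c) :
    stAv h f t ≤ c := by
  have : (∫ s in t..(t+h), f s) ≤ ∫ s in t..(t+h), c := by
    apply intervalIntegral.integral_mono_on (by linarith) hfi (by simp) hfc
  rw [intervalIntegral.integral_const] at this
  have h2 : stAv h f t ≤ h⁻¹ * ((t + h - t) • c) := by
    unfold stAv
    exact mul_le_mul_of_nonneg_left this (by positivity)
  refine h2.trans_eq ?_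
  simp only [add_sub_cancel_left, smul_eq_mul]
  field_simp

lemma stAv_ge {h : ℝ} (hh : 0 < h) {f : ℝ → ℝ} {c t : ℝ}
    (hfi : IntervalIntegrable f volume t (t+h)) (hfc : ∀ s ∈ Icc t (t+h), c ≤ f s) :
    c ≤ stAv h f t := by
  have : (∫ s in t..(t+h), c) ≤ ∫ s in t..(t+h), f s := by
    apply intervalIntegral.integral_mono_on (by linarith) (by simp) hfi hfc
  rw [intervalIntegral.integral_const] at this
  have h2 : h⁻¹ * ((t + h - t) • c) ≤ stAv h f t :=
    mul_le_mul_of_nonneg_left this (by positivity)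
  refine le_trans (le_of_eq ?_) h2
  simp only [add_sub_cancel_left, smul_eq_mul]
  field_simp

lemma stAv_continuous {h : ℝ} {f : ℝ → ℝ}
    (hfi : ∀ a b : ℝ, IntervalIntegrable f volume a b) : Continuous (stAv h f) := by
  have key : ∀ t : ℝ, stAv h f t
      = h⁻¹ * ((∫ s in (0:ℝ)..(t+h), f s) - ∫ s in (0:ℝ)..t, f s) := by
    intro t
    unfold stAv
    congr 1
    have := intervalIntegral.integral_add_adjacent_intervals (hfi 0 t) (hfi t (t+h))
    linarith
  simp only [funext key]
  exact continuous_const.mul (((intervalIntegral.continuous_primitive hfi 0).comp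
    (continuous_id.add continuous_const)).sub (intervalIntegral.continuous_primitive hfi 0))

lemma stAv_contDiff {h : ℝ} {f : ℝ → ℝ} (hf : Continuous f) : ContDiff ℝ 1 (stAv h f) := by
  have hprim : ∀ b : ℝ, HasDerivAt (fun u => ∫ s in (0:ℝ)..u, f s) (f b) b := fun b =>
    intervalIntegral.integral_hasDerivAt_right (hf.intervalIntegrable 0 b)
      (hf.stronglyMeasurableAtFilter _ _) hf.continuousAt
  have key : ∀ t : ℝ, stAv h f t
      = h⁻¹ * ((∫ s in (0:ℝ)..(t+h), f s) - ∫ s in (0:ℝ)..t, f s) := by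
    intro t
    unfold stAv
    congr 1
    have := intervalIntegral.integral_add_adjacent_intervals
      (hf.intervalIntegrable 0 t : IntervalIntegrable f volume 0 t)
      (hf.intervalIntegrable t (t+h))
    linarith
  have hG : ∀ t : ℝ, HasDerivAt (stAv h f) (h⁻¹ * (f (t+h) - f t)) t := by
    intro t
    rw [funext key]
    have hc : HasDerivAt (fun x => ∫ s in (0:ℝ)..(x+h), f s) (f (t+h) * 1) t :=
      HasDerivAt.comp (h₂ := fun u => ∫ s in (0:ℝ)..u, f s) t (hprim (t+h)) ((hasDerivAt_id' t).add_const h)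
    exact HasDerivAt.congr_deriv ((hc.sub (hprim t)).const_mul h⁻¹) (by ring)
  rw [contDiff_one_iff_deriv]
  refine ⟨fun t => (hG t).differentiableAt, ?_⟩
  have : deriv (stAv h f) = fun t => h⁻¹ * (f (t+h) - f t) := funext fun t => (hG t).deriv
  rw [this]
  exact continuous_const.mul ((hf.comp (continuous_id.add continuous_const)).sub hf)

lemma stIntInt {f : ℝ → ℝ} (hf : Measurable f) {C : ℝ} (hC : ∀ t, |f t| ≤ C)
    (a b : ℝ) : IntervalIntegrable f volume a b := by
  apply IntervalIntegrable.mono_fun' (g := fun _ => C)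
  · exact intervalIntegrable_const
  · exact hf.aestronglyMeasurable
  · exact Filter.Eventually.of_forall fun t => by simpa using hC t

lemma stAv_sub {h : ℝ} {f g : ℝ → ℝ} {t : ℝ}
    (hfi : IntervalIntegrable f volume t (t+h)) (hgi : IntervalIntegrable g volume t (t+h)) :
    stAv h (fun s => f s - g s) t = stAv h f t - stAv h g t := by
  unfold stAv
  rw [intervalIntegral.integral_sub hfi hgi]; ring

lemma stAv_sum {Γ : Type*} [Fintype Γ] {h : ℝ} {F : Γ → ℝ → ℝ} {t : ℝ}
    (hFi : ∀ σ, IntervalIntegrable (F σ) volume t (t+h)) :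
    stAv h (fun s => ∑ σ : Γ, F σ s) t = ∑ σ : Γ, stAv h (F σ) t := by
  unfold stAv
  rw [intervalIntegral.integral_finset_sum (fun σ _ => hFi σ), Finset.mul_sum]

lemma stAv_abs_le {h : ℝ} (hh : 0 < h) {f : ℝ → ℝ} {t : ℝ}
    (hfi : IntervalIntegrable f volume t (t+h)) :
    |stAv h f t| ≤ stAv h (fun s => |f s|) t := by
  unfold stAv
  rw [abs_mul, abs_of_nonneg (inv_nonneg.2 hh.le)]
  exact mul_le_mul_of_nonneg_left
    (intervalIntegral.abs_integral_le_integral_abs (by linarith)) (by positivity)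

/-- Contraction: for nonnegative `v`, the integral of the moving average is dominated. -/
lemma stAv_integral_le {h a b : ℝ} (hh : 0 < h) (hab : h ≤ b - a) {v : ℝ → ℝ}
    (hvi : ∀ a b : ℝ, IntervalIntegrable v volume a b) (hv0 : ∀ s, 0 ≤ v s) :
    (∫ t in a..b, stAv h v t) ≤ ∫ t in a..(b+h), v t := by
  set W : ℝ → ℝ := fun u => ∫ s in a..u, v s with hW
  have hWc : Continuous W := intervalIntegral.continuous_primitive hvi a
  have hWmono : ∀ ⦃u w : ℝ⦄, u ≤ w → W u ≤ W w := by
    intro u w huw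
    have : W w - W u = ∫ s in u..w, v s := by
      have := intervalIntegral.integral_add_adjacent_intervals (hvi a u) (hvi u w)
      simp only [hW]; linarith
    have h0 : 0 ≤ ∫ s in u..w, v s :=
      intervalIntegral.integral_nonneg huw fun s _ => hv0 s
    linarith
  have hWnonneg : ∀ u, a ≤ u → 0 ≤ W u := by
    intro u hu
    have : W a = 0 := by simp [hW]
    rw [← this]; exact hWmono hu
  have key : ∀ t : ℝ, stAv h v t = h⁻¹ * (W (t+h) - W t) := by
    intro t
    unfold stAv
    have := intervalIntegral.integral_add_adjacent_intervals (hvi a t) (hvi t (t+h))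
    simp only [hW]
    congr 1
    linarith
  have hab' : a ≤ b := by linarith
  calc (∫ t in a..b, stAv h v t)
      = h⁻¹ * ((∫ t in a..b, W (t+h)) - ∫ t in a..b, W t) := by
        rw [funext key, intervalIntegral.integral_const_mul]
        congr 1
        exact intervalIntegral.integral_sub
          (((hWc.comp (continuous_id.add continuous_const)).intervalIntegrable a b :
            IntervalIntegrable (fun t => W (t+h)) volume a b))
          (hWc.intervalIntegrable a b)
    _ = h⁻¹ * ((∫ t in b..(b+h), W t) - ∫ t in a..(a+h), W t) := by
        congr 1
        rw [intervalIntegral.integral_comp_add_right]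
        have e1 := intervalIntegral.integral_add_adjacent_intervals
          (hWc.intervalIntegrable (a+h) b : IntervalIntegrable W volume (a+h) b)
          (hWc.intervalIntegrable b (b+h))
        have e2 := intervalIntegral.integral_add_adjacent_intervals
          (hWc.intervalIntegrable a (a+h) : IntervalIntegrable W volume a (a+h))
          (hWc.intervalIntegrable (a+h) b)
        linarith
    _ ≤ h⁻¹ * (h * W (b+h) - 0) := by
        apply mul_le_mul_of_nonneg_left _ (by positivity)
        have h1 : (∫ t in b..(b+h), W t) ≤ h * W (b+h) := by
          have := intervalIntegral.integral_mono_on (by linarith : b ≤ b + h)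
            (hWc.intervalIntegrable b (b+h) : IntervalIntegrable W volume b (b+h))
            (intervalIntegrable_const)
            (fun s hs => hWmono hs.2)
          rw [intervalIntegral.integral_const] at this
          simpa [smul_eq_mul, add_sub_cancel_left] using this
        have h2 : (0:ℝ) ≤ ∫ t in a..(a+h), W t := by
          apply intervalIntegral.integral_nonneg (by linarith)
          exact fun s hs => hWnonneg s hs.1
        linarith
    _ = W (b+h) := by field_simp; ring
    _ = ∫ t in a..(b+h), v t := rfl

lemma stAv_abs_le' {h : ℝ} (hh : 0 < h) {f : ℝ → ℝ} {c t : ℝ}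
    (hfi : IntervalIntegrable f volume t (t+h))
    (hfc : ∀ s ∈ Icc t (t+h), |f s| ≤ c) : |stAv h f t| ≤ c := by
  refine (stAv_abs_le hh hfi).trans (stAv_le hh hfi.abs hfc)

lemma stAv_unif {c : ℝ → ℝ} (hcc : Continuous c) (hcu : UniformContinuous c) {δ : ℝ}
    (hδ : 0 < δ) :
    ∃ h₀ : ℝ, 0 < h₀ ∧ ∀ h : ℝ, 0 < h → h ≤ h₀ → ∀ t : ℝ,
      |stAv h (stAv h c) t - c t| ≤ 2 * δ := by
  obtain ⟨η, hη, hmod⟩ := Metric.uniformContinuous_iff.1 hcu δ hδ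
  refine ⟨η/2, by positivity, fun h hh hhη t => ?_⟩
  have single : ∀ u : ℝ, |stAv h c u - c u| ≤ δ := by
    intro u
    have heq : stAv h c u - c u = stAv h (fun s => c s - c u) u := by
      rw [stAv_sub (hcc.intervalIntegrable _ _ : IntervalIntegrable c volume u (u+h))
        intervalIntegrable_const, stAv_const hh]
    rw [heq]
    apply stAv_abs_le' hh
      ((hcc.intervalIntegrable _ _ : IntervalIntegrable c volume u (u+h)).sub
        intervalIntegrable_const)
    intro s hs
    have : dist s u < η := by
      rw [Real.dist_eq, abs_of_nonneg (by linarith [hs.1])]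
      have := hs.2; linarith
    exact (le_of_lt (by simpa [Real.dist_eq] using hmod this))
  have hAvc : Continuous (stAv h c) :=
    stAv_continuous fun a b => hcc.intervalIntegrable a b
  have heq2 : stAv h (stAv h c) t - stAv h c t = stAv h (fun s => stAv h c s - c s) t := by
    rw [stAv_sub (hAvc.intervalIntegrable _ _ : IntervalIntegrable (stAv h c) volume t (t+h))
      (hcc.intervalIntegrable _ _)]
  have h1 : |stAv h (stAv h c) t - stAv h c t| ≤ δ := by
    rw [heq2]
    apply stAv_abs_le' hh
      ((hAvc.intervalIntegrable _ _ : IntervalIntegrable (stAv h c) volume t (t+h)).sub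
        (hcc.intervalIntegrable _ _))
    exact fun s _ => single s
  calc |stAv h (stAv h c) t - c t|
      ≤ |stAv h (stAv h c) t - stAv h c t| + |stAv h c t - c t| := abs_sub_le _ _ _
    _ ≤ δ + δ := add_le_add h1 (single t)
    _ = 2 * δ := by ring

/-- Key single-function approximation: `L¹` convergence of the double moving average. -/
lemma stApprox (T : ℝ) (hT : 0 < T) {q : ℝ → ℝ} (hqm : Measurable q)
    (hq1 : ∀ t, |q t| ≤ 1) (hqi : Integrable q volume) {ε : ℝ} (hε : 0 < ε) :
    ∃ h₀ : ℝ, 0 < h₀ ∧ ∀ h : ℝ, 0 < h → h ≤ h₀ →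
      (∫ t in (0:ℝ)..T, |stAv h (stAv h q) t - q t|) ≤ ε := by
  obtain ⟨c, hcsupp, hcdist, hcc, hcI⟩ :=
    hqi.exists_hasCompactSupport_integral_sub_le (ε := ε/4) (by positivity)
  have hcu : UniformContinuous c := hcsupp.uniformContinuous_of_continuous hcc
  set δ : ℝ := ε/(4*(T+1)) with hδdef
  have hδ : 0 < δ := by positivity
  obtain ⟨h₁, hh₁, hdouble⟩ := stAv_unif hcc hcu hδ
  refine ⟨min h₁ T, lt_min hh₁ hT, fun h hh hhle => ?_⟩
  have hhh₁ : h ≤ h₁ := hhle.trans (min_le_left _ _)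
  have hhT : h ≤ T := hhle.trans (min_le_right _ _)
  set w : ℝ → ℝ := fun s => q s - c s with hwdef
  have hqii : ∀ a b : ℝ, IntervalIntegrable q volume a b := stIntInt hqm hq1
  have hcii : ∀ a b : ℝ, IntervalIntegrable c volume a b :=
    fun a b => hcc.intervalIntegrable a b
  have hwii : ∀ a b : ℝ, IntervalIntegrable w volume a b :=
    fun a b => (hqii a b).sub (hcii a b)
  have hAvw_cont : Continuous (stAv h w) := stAv_continuous hwii
  have hAvAvw_cont : Continuous (stAv h (stAv h w)) :=
    stAv_continuous fun a b => hAvw_cont.intervalIntegrable a b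
  have hAvc_cont : Continuous (stAv h c) := stAv_continuous hcii
  have hAvAvc_cont : Continuous (stAv h (stAv h c)) :=
    stAv_continuous fun a b => hAvc_cont.intervalIntegrable a b
  -- pointwise decomposition
  have hdecomp : ∀ t : ℝ, stAv h (stAv h q) t - q t
      = stAv h (stAv h w) t + (stAv h (stAv h c) t - c t) + (c t - q t) := by
    intro t
    have e1 : ∀ s : ℝ, stAv h w s = stAv h q s - stAv h c s := fun s =>
      stAv_sub (hqii s (s+h)) (hcii s (s+h))
    have e2 : stAv h (stAv h w) t = stAv h (stAv h q) t - stAv h (stAv h c) t := by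
      calc stAv h (stAv h w) t
          = stAv h (fun s => stAv h q s - stAv h c s) t := by
            congr 1; exact funext e1
        _ = stAv h (stAv h q) t - stAv h (stAv h c) t :=
            stAv_sub ((stAv_continuous hqii).intervalIntegrable _ _)
              (hAvc_cont.intervalIntegrable _ _)
    rw [e2]; ring
  -- integrability of pieces on [0, T]
  have hI1 : IntervalIntegrable (fun t => |stAv h (stAv h w) t|) volume 0 T :=
    hAvAvw_cont.abs.intervalIntegrable 0 T
  have hI2 : IntervalIntegrable (fun t => |stAv h (stAv h c) t - c t|) volume 0 T :=
    (hAvAvc_cont.sub hcc).abs.intervalIntegrable 0 T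
  have hI3 : IntervalIntegrable (fun t => |c t - q t|) volume 0 T :=
    ((hcii 0 T).sub (hqii 0 T)).abs
  -- the norm of w integrates to at most ε/4 on all of ℝ
  have hwint : Integrable w volume := hqi.sub hcI
  have hwfull : ∀ b : ℝ, 0 ≤ b → (∫ t in (0:ℝ)..b, |w t|) ≤ ε/4 := by
    intro b hb
    rw [intervalIntegral.integral_of_le hb]
    calc (∫ t in Ioc (0:ℝ) b, |w t|) ≤ ∫ t, |w t| := by
          apply setIntegral_le_integral hwint.abs
          exact Filter.Eventually.of_forall fun t => abs_nonneg _
      _ ≤ ε/4 := by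
          calc (∫ t, |w t|) = ∫ t, ‖q t - c t‖ := by
                simp only [hwdef, Real.norm_eq_abs]
            _ ≤ ε/4 := hcdist
  -- term 1 bound
  have hterm1 : (∫ t in (0:ℝ)..T, |stAv h (stAv h w) t|) ≤ ε/4 := by
    have s1 : (∫ t in (0:ℝ)..T, |stAv h (stAv h w) t|)
        ≤ ∫ t in (0:ℝ)..T, stAv h (fun s => |stAv h w s|) t := by
      apply intervalIntegral.integral_mono_on hT.le hI1
        ((stAv_continuous fun a b => hAvw_cont.abs.intervalIntegrable a b).intervalIntegrable
          0 T)
      exact fun t _ => stAv_abs_le hh (hAvw_cont.intervalIntegrable _ _)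
    have s2 : (∫ t in (0:ℝ)..T, stAv h (fun s => |stAv h w s|) t)
        ≤ ∫ t in (0:ℝ)..(T+h), |stAv h w t| := by
      apply stAv_integral_le hh (by linarith)
        (fun a b => hAvw_cont.abs.intervalIntegrable a b)
        (fun s => abs_nonneg _)
    have s3 : (∫ t in (0:ℝ)..(T+h), |stAv h w t|)
        ≤ ∫ t in (0:ℝ)..(T+h), stAv h (fun s => |w s|) t := by
      apply intervalIntegral.integral_mono_on (by linarith)
        (hAvw_cont.abs.intervalIntegrable 0 (T+h))
        ((stAv_continuous fun a b => (hwii a b).abs).intervalIntegrable 0 (T+h))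
      exact fun t _ => stAv_abs_le hh (hwii _ _)
    have s4 : (∫ t in (0:ℝ)..(T+h), stAv h (fun s => |w s|) t)
        ≤ ∫ t in (0:ℝ)..(T+h+h), |w t| := by
      apply stAv_integral_le hh (by linarith) (fun a b => (hwii a b).abs)
        (fun s => abs_nonneg _)
    have s5 := hwfull (T+h+h) (by linarith)
    linarith
  -- term 2 bound
  have hterm2 : (∫ t in (0:ℝ)..T, |stAv h (stAv h c) t - c t|) ≤ ε/2 := by
    have : (∫ t in (0:ℝ)..T, |stAv h (stAv h c) t - c t|)
        ≤ ∫ t in (0:ℝ)..T, (2*δ : ℝ) := by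
      apply intervalIntegral.integral_mono_on hT.le hI2 intervalIntegrable_const
      exact fun t _ => hdouble h hh hhh₁ t
    rw [intervalIntegral.integral_const, smul_eq_mul] at this
    have : (∫ t in (0:ℝ)..T, |stAv h (stAv h c) t - c t|) ≤ (T - 0) * (2*δ) := this
    have hδε : δ * (4*(T+1)) = ε := by
      rw [hδdef]; field_simp
    have hTδ : (T - 0) * (2*δ) ≤ ε/2 := by nlinarith [hδ.le, hT.le]
    linarith
  -- term 3 bound
  have hterm3 : (∫ t in (0:ℝ)..T, |c t - q t|) ≤ ε/4 := by
    have : (∫ t in (0:ℝ)..T, |c t - q t|) = ∫ t in (0:ℝ)..T, |w t| := by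
      congr 1; funext t; rw [hwdef]; exact (abs_sub_comm _ _).symm
    rw [this]
    exact hwfull T hT.le
  -- combine
  have hmono : (∫ t in (0:ℝ)..T, |stAv h (stAv h q) t - q t|)
      ≤ ∫ t in (0:ℝ)..T,
        (|stAv h (stAv h w) t| + |stAv h (stAv h c) t - c t| + |c t - q t|) := by
    have hAvAvq_cont : Continuous (stAv h (stAv h q)) :=
      stAv_continuous fun a b => (stAv_continuous hqii).intervalIntegrable a b
    apply intervalIntegral.integral_mono_on hT.le
    · exact ((hAvAvq_cont.intervalIntegrable 0 T).sub (hqii 0 T)).abs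
    · exact (hI1.add hI2).add hI3
    · intro t _
      rw [hdecomp t]
      exact (abs_add_three _ _ _)
  have hsplit : (∫ t in (0:ℝ)..T,
        (|stAv h (stAv h w) t| + |stAv h (stAv h c) t - c t| + |c t - q t|))
      = (∫ t in (0:ℝ)..T, |stAv h (stAv h w) t|)
        + (∫ t in (0:ℝ)..T, |stAv h (stAv h c) t - c t|)
        + (∫ t in (0:ℝ)..T, |c t - q t|) := by
    rw [intervalIntegral.integral_add (hI1.add hI2) hI3,
      intervalIntegral.integral_add hI1 hI2]
  linarith

lemma stMaster {Γ : Type*} [Fintype Γ] [Nonempty Γ] (T : ℝ) (hT : 0 < T)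
    (ρ : ℝ → Γ → ℝ)
    (hρmeas : ∀ σ : Γ, Measurable fun t => ρ t σ)
    (hρmem : ∀ t ∈ Set.Icc (0:ℝ) T, ∀ σ : Γ, ρ t σ ∈ Set.Icc (0:ℝ) 1)
    (hρsum : ∀ᵐ t ∂(volume.restrict (Set.Icc (0:ℝ) T)), ∑ σ : Γ, ρ t σ = 1)
    {ε : ℝ} (hε : 0 < ε) :
    ∃ f : ℝ → Γ → ℝ,
      (∀ σ : Γ, ContDiff ℝ 1 (fun t => f t σ)) ∧
      (∀ t ∈ Set.Icc (0:ℝ) T, ∀ σ : Γ, 0 < f t σ ∧ f t σ ≤ 1) ∧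
      (∀ t ∈ Set.Icc (0:ℝ) T, ∑ σ : Γ, f t σ = 1) ∧
      (∀ σ : Γ, (∫ t in Set.Icc (0:ℝ) T, |f t σ - ρ t σ|) < ε) := by
  classical
  set k : ℕ := Fintype.card Γ with hk
  have hkpos : 0 < k := Fintype.card_pos
  set u : ℝ := (k : ℝ)⁻¹ with hu
  have hupos : 0 < u := by positivity
  have hule : u ≤ 1 := by
    rw [hu]
    apply inv_le_one_of_one_le₀
    exact_mod_cast hkpos
  have hsummeas : Measurable fun t => ∑ σ : Γ, ρ t σ :=
    Finset.measurable_sum _ fun σ _ => hρmeas σ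
  set E : Set ℝ := Set.Icc (0:ℝ) T ∩ ((fun t => ∑ σ : Γ, ρ t σ) ⁻¹' {1}) with hE
  have hEmeas : MeasurableSet E :=
    measurableSet_Icc.inter (hsummeas (measurableSet_singleton 1))
  set ρ' : ℝ → Γ → ℝ := fun t σ => if t ∈ E then ρ t σ else u with hρ'
  have hρ'meas : ∀ σ, Measurable fun t => ρ' t σ := fun σ =>
    Measurable.ite hEmeas (hρmeas σ) measurable_const
  have hρ'mem : ∀ t σ, ρ' t σ ∈ Set.Icc (0:ℝ) 1 := by
    intro t σ
    by_cases ht : t ∈ E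
    · simp only [hρ', ht, if_true]
      exact hρmem t ht.1 σ
    · simp only [hρ', ht, if_false]
      exact ⟨hupos.le, hule⟩
  have hρ'sum : ∀ t, ∑ σ : Γ, ρ' t σ = 1 := by
    intro t
    by_cases ht : t ∈ E
    · simp only [hρ', ht, if_true]
      exact ht.2
    · simp only [hρ', ht, if_false, Finset.sum_const, Finset.card_univ, nsmul_eq_mul, ← hk, hu]
      field_simp
  set q : Γ → ℝ → ℝ := fun σ => (Set.Icc (-1:ℝ) (T+1)).indicator (fun t => ρ' t σ) with hq
  have hqmeas : ∀ σ, Measurable (q σ) := fun σ =>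
    (hρ'meas σ).indicator measurableSet_Icc
  have hqmem : ∀ σ t, q σ t ∈ Set.Icc (0:ℝ) 1 := by
    intro σ t
    simp only [hq]
    by_cases ht : t ∈ Set.Icc (-1:ℝ) (T+1)
    · rw [Set.indicator_of_mem ht]; exact hρ'mem t σ
    · rw [Set.indicator_of_notMem ht]; exact ⟨le_refl 0, zero_le_one⟩
  have hqabs : ∀ σ t, |q σ t| ≤ 1 := by
    intro σ t
    rw [abs_le]
    exact ⟨by linarith [(hqmem σ t).1], (hqmem σ t).2⟩
  have hqint : ∀ σ, Integrable (q σ) volume := by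
    intro σ
    simp only [hq]
    rw [integrable_indicator_iff measurableSet_Icc]
    apply Integrable.mono' (g := fun _ => (1:ℝ))
    · exact integrableOn_const measure_Icc_lt_top.ne
    · exact (hρ'meas σ).aestronglyMeasurable.restrict
    · exact Filter.Eventually.of_forall fun t => by
        rw [Real.norm_eq_abs, abs_le]
        exact ⟨by linarith [(hρ'mem t σ).1], (hρ'mem t σ).2⟩
  -- choose the smoothing parameter
  have happrox := fun σ : Γ =>
    stApprox T hT (hqmeas σ) (hqabs σ) (hqint σ) (ε := ε/4) (by positivity)
  choose h₀ h₀pos h₀spec using happrox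
  set m : ℝ := Finset.univ.inf' Finset.univ_nonempty h₀ with hm
  have hmpos : 0 < m := by
    rw [hm, Finset.lt_inf'_iff]
    exact fun σ _ => h₀pos σ
  set h : ℝ := min (min (1/2) T) m with hhdef
  have hhpos : 0 < h := lt_min (lt_min (by norm_num) hT) hmpos
  have hhhalf : h ≤ 1/2 := (min_le_left _ _).trans (min_le_left _ _)
  have hh₀ : ∀ σ, h ≤ h₀ σ := fun σ =>
    (min_le_right _ _).trans (Finset.inf'_le _ (Finset.mem_univ σ))
  set g : Γ → ℝ → ℝ := fun σ => stAv h (stAv h (q σ)) with hg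
  have hqii : ∀ σ, ∀ a b : ℝ, IntervalIntegrable (q σ) volume a b := fun σ =>
    stIntInt (hqmeas σ) (hqabs σ)
  have hAvq_cont : ∀ σ, Continuous (stAv h (q σ)) := fun σ => stAv_continuous (hqii σ)
  have hg_cont : ∀ σ, Continuous (g σ) := fun σ =>
    stAv_continuous fun a b => (hAvq_cont σ).intervalIntegrable a b
  have hg_cd : ∀ σ, ContDiff ℝ 1 (g σ) := fun σ => stAv_contDiff (hAvq_cont σ)
  -- bounds for the inner and outer averages
  have hAvq_mem : ∀ σ s, stAv h (q σ) s ∈ Set.Icc (0:ℝ) 1 := by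
    intro σ s
    constructor
    · exact stAv_ge hhpos (hqii σ s (s+h)) fun r _ => (hqmem σ r).1
    · exact stAv_le hhpos (hqii σ s (s+h)) fun r _ => (hqmem σ r).2
  have hg_mem : ∀ σ t, g σ t ∈ Set.Icc (0:ℝ) 1 := by
    intro σ t
    constructor
    · exact stAv_ge hhpos ((hAvq_cont σ).intervalIntegrable _ _) fun r _ => (hAvq_mem σ r).1
    · exact stAv_le hhpos ((hAvq_cont σ).intervalIntegrable _ _) fun r _ => (hAvq_mem σ r).2
  -- sum of the averages is 1 on [0, T]
  have hsum_inner : ∀ s : ℝ, -1 ≤ s → s + h ≤ T + 1 → ∑ σ : Γ, stAv h (q σ) s = 1 := by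
    intro s hs1 hs2
    rw [← stAv_sum fun σ => hqii σ s (s+h)]
    have : stAv h (fun r => ∑ σ : Γ, q σ r) s = stAv h (fun _ => (1:ℝ)) s := by
      apply stAv_congr hhpos.le
      intro r hr
      have hrmem : r ∈ Set.Icc (-1:ℝ) (T+1) := ⟨by linarith [hr.1], by linarith [hr.2]⟩
      simp only [hq, Set.indicator_of_mem hrmem]
      exact hρ'sum r
    rw [this, stAv_const hhpos]
  have hsum_g : ∀ t ∈ Set.Icc (0:ℝ) T, ∑ σ : Γ, g σ t = 1 := by
    intro t ht
    simp only [hg]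
    rw [← stAv_sum fun σ => (hAvq_cont σ).intervalIntegrable t (t+h)]
    have : stAv h (fun s => ∑ σ : Γ, stAv h (q σ) s) t = stAv h (fun _ => (1:ℝ)) t := by
      apply stAv_congr hhpos.le
      intro s hs
      exact hsum_inner s (by linarith [ht.1, hs.1]) (by linarith [ht.2, hs.2, hhhalf])
    rw [this, stAv_const hhpos]
  -- mixing parameter
  set θ : ℝ := min (1/2) (ε/(2*(T+1))) with hθ
  have hθpos : 0 < θ := lt_min (by norm_num) (by positivity)
  have hθhalf : θ ≤ 1/2 := min_le_left _ _
  have hθε : θ ≤ ε/(2*(T+1)) := min_le_right _ _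
  refine ⟨fun t σ => (1-θ) * g σ t + θ * u, ?_, ?_, ?_, ?_⟩
  · intro σ
    exact (contDiff_const.mul (hg_cd σ)).add contDiff_const
  · intro t ht σ
    constructor
    · show 0 < (1-θ) * g σ t + θ * u
      have h1 := (hg_mem σ t).1
      nlinarith [mul_nonneg (by linarith : (0:ℝ) ≤ 1-θ) h1, mul_pos hθpos hupos]
    · show (1-θ) * g σ t + θ * u ≤ 1
      have h2 := (hg_mem σ t).2
      nlinarith [mul_le_mul_of_nonneg_left h2 (by linarith : (0:ℝ) ≤ 1-θ),
        mul_le_mul_of_nonneg_left hule hθpos.le]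
  · intro t ht
    show ∑ σ : Γ, ((1-θ) * g σ t + θ * u) = 1
    rw [Finset.sum_add_distrib, ← Finset.mul_sum, hsum_g t ht, Finset.sum_const,
      Finset.card_univ, ← hk, nsmul_eq_mul]
    have : (k:ℝ) * (θ * u) = θ := by
      rw [hu]
      have : (k:ℝ) ≠ 0 := by positivity
      field_simp
    rw [this]; ring
  · intro σ
    -- replace ρ by q σ a.e. on the interval
    have hae : ∀ᵐ t ∂(volume.restrict (Set.Icc (0:ℝ) T)),
        |(1-θ) * g σ t + θ * u - ρ t σ| = |(1-θ) * g σ t + θ * u - q σ t| := by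
      filter_upwards [hρsum, ae_restrict_mem measurableSet_Icc] with t hsum ht
      have htE : t ∈ E := ⟨ht, hsum⟩
      have htI : t ∈ Set.Icc (-1:ℝ) (T+1) := ⟨by linarith [ht.1], by linarith [ht.2]⟩
      have : q σ t = ρ t σ := by
        simp only [hq, Set.indicator_of_mem htI, hρ', htE, if_true]
      rw [this]
    rw [integral_congr_ae hae]
    have hIcc : (∫ t in Set.Icc (0:ℝ) T, |(1-θ) * g σ t + θ * u - q σ t|)
        = ∫ t in (0:ℝ)..T, |(1-θ) * g σ t + θ * u - q σ t| := by
      rw [integral_Icc_eq_integral_Ioc, ← intervalIntegral.integral_of_le hT.le]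
    rw [hIcc]
    -- pointwise bound and split
    have hfii : IntervalIntegrable (fun t => |(1-θ) * g σ t + θ * u - q σ t|) volume 0 T :=
      ((((continuous_const.mul (hg_cont σ)).add continuous_const).intervalIntegrable
        0 T).sub (hqii σ 0 T)).abs
    have hgii : IntervalIntegrable (fun t => (1-θ) * |g σ t - q σ t| + θ) volume 0 T := by
      apply IntervalIntegrable.add _ intervalIntegrable_const
      exact (((hg_cont σ).intervalIntegrable 0 T).sub (hqii σ 0 T)).abs.const_mul _
    have hmono : (∫ t in (0:ℝ)..T, |(1-θ) * g σ t + θ * u - q σ t|)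
        ≤ ∫ t in (0:ℝ)..T, ((1-θ) * |g σ t - q σ t| + θ) := by
      apply intervalIntegral.integral_mono_on hT.le hfii hgii
      intro t _
      have e : (1-θ) * g σ t + θ * u - q σ t
          = (1-θ) * (g σ t - q σ t) + θ * (u - q σ t) := by ring
      rw [e]
      calc |(1-θ) * (g σ t - q σ t) + θ * (u - q σ t)|
          ≤ |(1-θ) * (g σ t - q σ t)| + |θ * (u - q σ t)| := abs_add_le _ _
        _ = (1-θ) * |g σ t - q σ t| + θ * |u - q σ t| := by
            rw [abs_mul, abs_mul, abs_of_nonneg (by linarith : (0:ℝ) ≤ 1-θ),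
              abs_of_nonneg hθpos.le]
        _ ≤ (1-θ) * |g σ t - q σ t| + θ * 1 := by
            have : |u - q σ t| ≤ 1 := by
              rw [abs_le]
              constructor
              · linarith [hupos.le, (hqmem σ t).2]
              · linarith [hule, (hqmem σ t).1]
            nlinarith [hθpos.le]
        _ = (1-θ) * |g σ t - q σ t| + θ := by ring
    have hsplit : (∫ t in (0:ℝ)..T, ((1-θ) * |g σ t - q σ t| + θ))
        = (1-θ) * (∫ t in (0:ℝ)..T, |g σ t - q σ t|) + θ * T := by
      rw [intervalIntegral.integral_add
        ((((hg_cont σ).intervalIntegrable 0 T).sub (hqii σ 0 T)).abs.const_mul _)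
        intervalIntegrable_const, intervalIntegral.integral_const_mul,
        intervalIntegral.integral_const, smul_eq_mul, sub_zero, mul_comm T θ]
    have herr : (∫ t in (0:ℝ)..T, |g σ t - q σ t|) ≤ ε/4 :=
      h₀spec σ h hhpos (hh₀ σ)
    have hθT : θ * T < ε/2 := by
      have h1 : θ * T ≤ ε/(2*(T+1)) * T :=
        mul_le_mul_of_nonneg_right hθε hT.le
      have h2 : ε/(2*(T+1)) * T < ε/2 := by
        rw [div_mul_eq_mul_div, div_lt_div_iff₀ (by positivity) (by norm_num)]
        nlinarith
      linarith
    have hgq_nonneg : (0:ℝ) ≤ ∫ t in (0:ℝ)..T, |g σ t - q σ t| :=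
      intervalIntegral.integral_nonneg hT.le fun t _ => abs_nonneg _
    nlinarith [hθpos.le, hθhalf]


/-- any measurable `ρ : [0,T] → [0,1]^Γ` with `Σ_σ ρ_σ = 1` a.e. can be
approximated in `L¹([0,T])`, componentwise, by functions `ρ^{(n)} : [0,T] → (0,1]^Γ` that
are `C¹` on `[0,T]`, strictly positive, and satisfy `Σ_σ ρ^{(n)}_σ(t) = 1` everywhere. -/
theorem stmt16 {Γ : Type*} [Fintype Γ] (T : ℝ) (hT : 0 < T)
    (ρ : ℝ → Γ → ℝ)
    (hρmeas : ∀ σ : Γ, Measurable fun t => ρ t σ)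
    (hρmem : ∀ t ∈ Set.Icc (0:ℝ) T, ∀ σ : Γ, ρ t σ ∈ Set.Icc (0:ℝ) 1)
    (hρsum : ∀ᵐ t ∂(volume.restrict (Set.Icc (0:ℝ) T)), ∑ σ : Γ, ρ t σ = 1) :
    ∃ ρn : ℕ → ℝ → Γ → ℝ,
      (∀ n, ∀ σ : Γ, ContDiffOn ℝ 1 (fun t => ρn n t σ) (Set.Icc 0 T)) ∧
      (∀ n, ∀ t ∈ Set.Icc (0:ℝ) T, ∀ σ : Γ, 0 < ρn n t σ ∧ ρn n t σ ≤ 1) ∧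
      (∀ n, ∀ t ∈ Set.Icc (0:ℝ) T, ∑ σ : Γ, ρn n t σ = 1) ∧
      (∀ σ : Γ,
        Filter.Tendsto (fun n => ∫ t in Set.Icc (0:ℝ) T, |ρn n t σ - ρ t σ|)
          Filter.atTop (nhds 0)) := by
  by_cases hΓ : Nonempty Γ
  · have hmaster := fun n : ℕ =>
      stMaster T hT ρ hρmeas hρmem hρsum (ε := 1/((n:ℝ)+1)) (by positivity)
    choose F hF1 hF2 hF3 hF4 using hmaster
    refine ⟨F, fun n σ => (hF1 n σ).contDiffOn, hF2, hF3, fun σ => ?_⟩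
    apply squeeze_zero (fun n => integral_nonneg fun t => abs_nonneg _)
      (fun n => (hF4 n σ).le)
    exact tendsto_one_div_add_atTop_nhds_zero_nat
  · exfalso
    haveI : IsEmpty Γ := not_nonempty_iff.1 hΓ
    have hzero : ∀ᵐ t ∂(volume.restrict (Set.Icc (0:ℝ) T)), (0:ℝ) = 1 := by
      filter_upwards [hρsum] with t ht
      simpa using ht
    have hne : (volume.restrict (Set.Icc (0:ℝ) T)) ≠ 0 := by
      intro hcontra
      rw [Measure.restrict_eq_zero, Real.volume_Icc] at hcontra
      rw [ENNReal.ofReal_eq_zero] at hcontra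
      linarith
    haveI : (ae (volume.restrict (Set.Icc (0:ℝ) T))).NeBot := ae_neBot.2 hne
    obtain ⟨t, ht⟩ := hzero.exists
    norm_num at ht
end
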